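/- arXiv:1411.2807 — 4 statements merged into one kernel-verified Lean document; each statement's English description precedes it below -/
import Mathlib

section
/- (Theorem 3, upper bound and weak ergodicity for the SZK model.) In the SZK setting, assume λ_{k+1}(t) ≤ λ_k(t) and μ_{k+1}(t) ≤ μ_k(t) for all 1 ≤ k ≤ S−1 and all t ≥ 0. Set α_k(t) = −∑_{i=1}^S (D B(t) D⁻¹)_{ik} for 1 ≤ k ≤ S and β^*(t) = min_{1≤k≤S} α_k(t). Then for any two differentiable functions z*, z** : [0,∞) → ℝ^S satisfying z'(t) = B(t)z(t) + f(t) for all t ≥ 0, where f(t)_i = λ_i(t), one has ‖D(z*(t) − z**(t))‖₁ ≤ exp(−∫₀ᵗ β^*(τ) dτ) · ‖D(z*(0) − z**(0))‖₁ for all t ≥ 0; moreover, if ∫₀^∞ β^*(t) dt = +∞ then ‖z*(t) − z**(t)‖₁ → 0 as t → ∞. -/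
open Set Filter

/-- The reduced matrix `B(t)` of the SZK model on `{0,…,S}` with arrival rates
`λ_k` and service rates `μ_k`: `B_{ij} = A_{ij} − A_{i0}` where `A(t)` is the
transposed intensity matrix and `A_{i0} = λ_i`; 1-based indices `1,…,S` are
encoded by `i : Fin S ↦ i+1`. -/
def szkB (S : ℕ) (lam mu : ℕ → ℝ → ℝ) (t : ℝ) : Matrix (Fin S) (Fin S) ℝ :=
  fun i j =>
    (if (j : ℕ) < (i : ℕ) then lam ((i : ℕ) - (j : ℕ)) t
     else if (i : ℕ) < (j : ℕ) then mu ((j : ℕ) - (i : ℕ)) t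
     else -((∑ k ∈ Finset.Icc 1 ((i : ℕ) + 1), mu k t) +
            ∑ k ∈ Finset.Icc 1 (S - ((i : ℕ) + 1)), lam k t))
    - lam ((i : ℕ) + 1) t

/-- The upper-triangular matrix `D` with `D_{kj} = d_k` for `j ≥ k`. -/
def triD (S : ℕ) (d : ℕ → ℝ) : Matrix (Fin S) (Fin S) ℝ :=
  fun i j => if i ≤ j then d ((i : ℕ) + 1) else 0

namespace SzkAux

noncomputable def triE (S : ℕ) (d : ℕ → ℝ) : Matrix (Fin S) (Fin S) ℝ :=
  fun i j => if i = j then (d ((i : ℕ) + 1))⁻¹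
    else if (j : ℕ) = (i : ℕ) + 1 then -(d ((j : ℕ) + 1))⁻¹ else 0

theorem triD_mul_triE (S : ℕ) (d : ℕ → ℝ) (hd : ∀ k, 1 ≤ k → k ≤ S → 0 < d k) :
    triD S d * triE S d = 1 := by
  ext i j
  rw [Matrix.mul_apply]
  have hdj : d ((j : ℕ) + 1) ≠ 0 := (hd _ (by omega) (by omega)).ne'
  have hsplit : ∀ k : Fin S, triD S d i k * triE S d k j
      = (if k = j then triD S d i j * (d ((j : ℕ) + 1))⁻¹ else 0)
        + (if (j : ℕ) = (k : ℕ) + 1 then triD S d i k * (-(d ((j : ℕ) + 1))⁻¹) else 0) := by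
    intro k
    by_cases h1 : k = j
    · subst h1
      have h2 : ¬ ((k : ℕ) = (k : ℕ) + 1) := by omega
      simp [triE, h2]
    · have h1' : ¬ ((j : ℕ) = (j : ℕ) + 1) := by omega
      by_cases h2 : (j : ℕ) = (k : ℕ) + 1
      · simp [triE, h1, h2]
      · simp [triE, h1, h2, Ne.symm h1]
  rw [Finset.sum_congr rfl (fun k _ => hsplit k), Finset.sum_add_distrib,
    Finset.sum_ite_eq' Finset.univ j]
  simp only [Finset.mem_univ, if_true]
  by_cases hj : (j : ℕ) = 0
  · rw [Finset.sum_eq_zero (fun k _ => by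
      rw [if_neg]; omega)]
    by_cases hij : i = j
    · subst hij
      simp only [triD, le_refl, if_pos, Matrix.one_apply_eq, add_zero]
      exact mul_inv_cancel₀ (hd _ (by omega) (by omega)).ne'
    · have : ¬ (i ≤ j) := by
        rw [Fin.le_def]
        have := Fin.val_ne_of_ne hij
        omega
      simp [triD, this, Matrix.one_apply_ne hij]
  · have hjS : (j : ℕ) - 1 < S := by omega
    set k0 : Fin S := ⟨(j : ℕ) - 1, hjS⟩ with hk0
    have hcong : ∀ k : Fin S,
        (if (j : ℕ) = (k : ℕ) + 1 then triD S d i k * (-(d ((j : ℕ) + 1))⁻¹) else 0)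
        = (if k = k0 then triD S d i k * (-(d ((j : ℕ) + 1))⁻¹) else 0) := by
      intro k
      by_cases h : k = k0
      · subst h; rw [if_pos rfl, if_pos (by simp [hk0]; omega)]
      · rw [if_neg, if_neg h]
        intro hc
        exact h (Fin.ext (by simp [hk0]; omega))
    rw [Finset.sum_congr rfl (fun k _ => hcong k), Finset.sum_ite_eq' Finset.univ k0]
    simp only [Finset.mem_univ, if_true]
    rcases lt_trichotomy i j with h | h | h
    · have h1 : i ≤ j := le_of_lt h
      have h2 : i ≤ k0 := by rw [Fin.le_def]; simp [hk0]; rw [Fin.lt_def] at h; omega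
      simp only [triD, if_pos h1, if_pos h2, Matrix.one_apply_ne (ne_of_lt h)]
      ring
    · subst h
      have h2 : ¬ (i ≤ k0) := by rw [Fin.le_def]; simp [hk0]; omega
      simp only [triD, le_refl, if_pos, if_neg h2, Matrix.one_apply_eq, zero_mul, add_zero]
      exact mul_inv_cancel₀ (hd _ (by omega) (by omega)).ne'
    · have h1 : ¬ (i ≤ j) := not_le_of_gt h
      have h2 : ¬ (i ≤ k0) := by rw [Fin.le_def]; simp [hk0]; rw [Fin.lt_def] at h; omega
      simp [triD, h1, h2, Matrix.one_apply_ne (ne_of_gt h)]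

theorem triD_inv (S : ℕ) (d : ℕ → ℝ) (hd : ∀ k, 1 ≤ k → k ≤ S → 0 < d k) :
    (triD S d)⁻¹ = triE S d :=
  Matrix.inv_eq_right_inv (triD_mul_triE S d hd)

theorem triE_mul_triD (S : ℕ) (d : ℕ → ℝ) (hd : ∀ k, 1 ≤ k → k ≤ S → 0 < d k) :
    triE S d * triD S d = 1 :=
  mul_eq_one_comm.mp (triD_mul_triE S d hd)



-- generic reindexing lemmas
theorem sum_reflect (F : ℕ → ℝ) (a b : ℕ) :
    ∑ k ∈ Finset.Ico a b, F (b - k) = ∑ m ∈ Finset.Icc 1 (b - a), F m := by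
  by_cases hab : a < b
  · refine Finset.sum_nbij' (fun k => b - k) (fun m => b - m) ?_ ?_ ?_ ?_ ?_
    · intro k hk; simp only [Finset.mem_Ico] at hk; simp only [Finset.mem_Icc]; omega
    · intro m hm; simp only [Finset.mem_Icc] at hm; simp only [Finset.mem_Ico]; omega
    · intro k hk; simp only [Finset.mem_Ico] at hk; show b - (b - k) = k; omega
    · intro m hm; simp only [Finset.mem_Icc] at hm; show b - (b - m) = m; omega
    · intro k _; rfl
  · rw [Finset.Ico_eq_empty (by omega), Finset.Icc_eq_empty (by omega)]; simp

theorem sum_shift (F : ℕ → ℝ) (a b c : ℕ) (h : c ≤ a) :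
    ∑ k ∈ Finset.Ico a b, F (k - c) = ∑ m ∈ Finset.Ico (a - c) (b - c), F m := by
  by_cases hab : a < b
  · refine Finset.sum_nbij' (fun k => k - c) (fun m => m + c) ?_ ?_ ?_ ?_ ?_
    · intro k hk; simp only [Finset.mem_Ico] at hk ⊢; omega
    · intro m hm; simp only [Finset.mem_Ico] at hm ⊢; omega
    · intro k hk; simp only [Finset.mem_Ico] at hk; show k - c + c = k; omega
    · intro m hm; simp only [Finset.mem_Ico] at hm; show m + c - c = m; omega
    · intro k _; rfl
  · rw [Finset.Ico_eq_empty (by omega), Finset.Ico_eq_empty (by omega)]; simp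


noncomputable def arow (S : ℕ) (lam mu : ℕ → ℝ → ℝ) (t : ℝ) (k j : ℕ) : ℝ :=
  if j < k then lam (k - j) t
  else if k < j then mu (j - k) t
  else -((∑ m ∈ Finset.Icc 1 k, mu m t) + ∑ m ∈ Finset.Icc 1 (S - k), lam m t)

noncomputable def qs (S : ℕ) (lam mu : ℕ → ℝ → ℝ) (t : ℝ) (i j : ℕ) : ℝ :=
  ∑ k ∈ Finset.Icc i S, arow S lam mu t k j

theorem qs_of_le (S : ℕ) (lam mu : ℕ → ℝ → ℝ) (t : ℝ) (i j : ℕ)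
    (hi : 1 ≤ i) (hij : i ≤ j) (hj : j ≤ S) :
    qs S lam mu t i j = -∑ m ∈ Finset.Icc (j - i + 1) j, mu m t := by
  have hIcc : Finset.Icc i S = Finset.Ico i (S + 1) := by rw [Finset.Ico_add_one_right_eq_Icc]
  rw [qs, hIcc, ← Finset.sum_Ico_consecutive _ (show i ≤ j by omega) (show j ≤ S + 1 by omega),
    Finset.sum_eq_sum_Ico_succ_bot (show j < S + 1 by omega)]
  have h1 : ∑ k ∈ Finset.Ico i j, arow S lam mu t k j = ∑ k ∈ Finset.Ico i j, mu (j - k) t := by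
    refine Finset.sum_congr rfl fun k hk => ?_
    simp only [Finset.mem_Ico] at hk
    rw [arow, if_neg (by omega), if_pos (by omega)]
  have h2 : ∑ k ∈ Finset.Ico (j + 1) (S + 1), arow S lam mu t k j
      = ∑ k ∈ Finset.Ico (j + 1) (S + 1), lam (k - j) t := by
    refine Finset.sum_congr rfl fun k hk => ?_
    simp only [Finset.mem_Ico] at hk
    rw [arow, if_pos (by omega)]
  rw [h1, h2, sum_reflect (fun m => mu m t) i j, sum_shift (fun m => lam m t) (j+1) (S+1) j (by omega)]
  rw [arow, if_neg (by omega), if_neg (by omega)]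
  have h3 : Finset.Ico (j + 1 - j) (S + 1 - j) = Finset.Icc 1 (S - j) := by
    rw [show S + 1 - j = (S - j) + 1 by omega, show j + 1 - j = 1 by omega, Finset.Ico_add_one_right_eq_Icc]
  rw [h3]
  have h4 : ∑ m ∈ Finset.Icc 1 j, mu m t
      = (∑ m ∈ Finset.Icc 1 (j - i), mu m t) + ∑ m ∈ Finset.Icc (j - i + 1) j, mu m t := by
    rw [← Finset.Ico_add_one_right_eq_Icc, ← Finset.Ico_add_one_right_eq_Icc, ← Finset.Ico_add_one_right_eq_Icc,
      ← Finset.sum_Ico_consecutive _ (show 1 ≤ j - i + 1 by omega) (show j - i + 1 ≤ j + 1 by omega)]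
  rw [h4]; ring

theorem qs_of_gt (S : ℕ) (lam mu : ℕ → ℝ → ℝ) (t : ℝ) (i j : ℕ)
    (hj : j < i) (hi : i ≤ S) :
    qs S lam mu t i j = ∑ m ∈ Finset.Icc (i - j) (S - j), lam m t := by
  have h1 : qs S lam mu t i j = ∑ k ∈ Finset.Ico i (S + 1), lam (k - j) t := by
    rw [qs, ← Finset.Ico_add_one_right_eq_Icc]
    refine Finset.sum_congr rfl fun k hk => ?_
    simp only [Finset.mem_Ico] at hk
    rw [arow, if_pos (by omega)]
  rw [h1, sum_shift (fun m => lam m t) i (S+1) j (by omega),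
    show S + 1 - j = (S - j) + 1 by omega, Finset.Ico_add_one_right_eq_Icc]



theorem szkB_eq (S : ℕ) (lam mu : ℕ → ℝ → ℝ) (t : ℝ) (i j : Fin S) :
    szkB S lam mu t i j
      = arow S lam mu t ((i : ℕ) + 1) ((j : ℕ) + 1) - lam ((i : ℕ) + 1) t := by
  simp only [szkB, arow, Nat.add_lt_add_iff_right, Nat.succ_sub_succ]

theorem sum_filter_szkB (S : ℕ) (lam mu : ℕ → ℝ → ℝ) (t : ℝ) (i l : Fin S) :
    ∑ k ∈ Finset.univ.filter (fun k : Fin S => i ≤ k), szkB S lam mu t k l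
      = qs S lam mu t ((i : ℕ) + 1) ((l : ℕ) + 1) - qs S lam mu t ((i : ℕ) + 1) 0 := by
  have h0 : qs S lam mu t ((i : ℕ) + 1) 0 = ∑ k ∈ Finset.Icc ((i : ℕ) + 1) S, lam k t := by
    rw [qs]
    refine Finset.sum_congr rfl fun k hk => ?_
    simp only [Finset.mem_Icc] at hk
    rw [arow, if_pos (by omega), Nat.sub_zero]
  rw [h0, qs, ← Finset.sum_sub_distrib]
  refine Finset.sum_nbij' (fun k : Fin S => (k : ℕ) + 1)
    (fun n => if h : n - 1 < S then (⟨n - 1, h⟩ : Fin S) else i) ?_ ?_ ?_ ?_ ?_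
  · intro k hk
    simp only [Finset.mem_filter, Finset.mem_univ, true_and, Fin.le_def] at hk
    simp only [Finset.mem_Icc]
    omega
  · intro n hn
    simp only [Finset.mem_Icc] at hn
    beta_reduce; rw [dif_pos (show n - 1 < S by omega)]
    simp only [Finset.mem_filter, Finset.mem_univ, true_and, Fin.le_def]
    omega
  · intro k hk
    beta_reduce; rw [dif_pos (show (k : ℕ) + 1 - 1 < S by omega)]
    exact Fin.ext (by simp)
  · intro n hn
    simp only [Finset.mem_Icc] at hn
    beta_reduce; rw [dif_pos (show n - 1 < S by omega)]
    show (n - 1) + 1 = n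
    omega
  · intro k hk
    rw [szkB_eq]

theorem C_apply (S : ℕ) (lam mu : ℕ → ℝ → ℝ) (d : ℕ → ℝ)
    (hd : ∀ k, 1 ≤ k → k ≤ S → 0 < d k) (t : ℝ) (i j : Fin S) :
    (triD S d * szkB S lam mu t * (triD S d)⁻¹) i j
      = d ((i : ℕ) + 1) * (d ((j : ℕ) + 1))⁻¹ *
          (qs S lam mu t ((i : ℕ) + 1) ((j : ℕ) + 1) - qs S lam mu t ((i : ℕ) + 1) (j : ℕ)) := by
  have hDB : ∀ l : Fin S, (triD S d * szkB S lam mu t) i l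
      = d ((i : ℕ) + 1) * (qs S lam mu t ((i : ℕ) + 1) ((l : ℕ) + 1)
          - qs S lam mu t ((i : ℕ) + 1) 0) := by
    intro l
    rw [Matrix.mul_apply, ← sum_filter_szkB S lam mu t i l, Finset.mul_sum, Finset.sum_filter]
    refine Finset.sum_congr rfl fun k _ => ?_
    simp only [triD]
    split_ifs <;> simp
  rw [triD_inv S d hd, Matrix.mul_apply]
  have hsplit : ∀ l : Fin S, (triD S d * szkB S lam mu t) i l * triE S d l j
      = (if l = j then (triD S d * szkB S lam mu t) i j * (d ((j : ℕ) + 1))⁻¹ else 0)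
        + (if (j : ℕ) = (l : ℕ) + 1 then
            (triD S d * szkB S lam mu t) i l * (-(d ((j : ℕ) + 1))⁻¹) else 0) := by
    intro l
    by_cases h1 : l = j
    · subst h1
      have h2 : ¬ ((l : ℕ) = (l : ℕ) + 1) := by omega
      simp [triE, h2]
    · have h1' : ¬ ((j : ℕ) = (j : ℕ) + 1) := by omega
      by_cases h2 : (j : ℕ) = (l : ℕ) + 1
      · simp [triE, h1, h2]
      · simp [triE, h1, h2, Ne.symm h1]
  rw [Finset.sum_congr rfl (fun l _ => hsplit l), Finset.sum_add_distrib,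
    Finset.sum_ite_eq' Finset.univ j]
  simp only [Finset.mem_univ, if_true]
  by_cases hj : (j : ℕ) = 0
  · rw [Finset.sum_eq_zero (fun l _ => by rw [if_neg]; omega), hDB j]
    simp only [hj]
    ring
  · have hjS : (j : ℕ) - 1 < S := by omega
    set k0 : Fin S := ⟨(j : ℕ) - 1, hjS⟩ with hk0
    have hcong : ∀ l : Fin S,
        (if (j : ℕ) = (l : ℕ) + 1 then
            (triD S d * szkB S lam mu t) i l * (-(d ((j : ℕ) + 1))⁻¹) else 0)
        = (if l = k0 then (triD S d * szkB S lam mu t) i l * (-(d ((j : ℕ) + 1))⁻¹) else 0) := by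
      intro l
      by_cases h : l = k0
      · subst h; rw [if_pos rfl, if_pos (by simp [hk0]; omega)]
      · rw [if_neg, if_neg h]
        intro hc
        exact h (Fin.ext (by simp [hk0]; omega))
    rw [Finset.sum_congr rfl (fun l _ => hcong l), Finset.sum_ite_eq' Finset.univ k0]
    simp only [Finset.mem_univ, if_true]
    rw [hDB j, hDB k0]
    have : ((k0 : ℕ) + 1) = (j : ℕ) := by simp [hk0]; omega
    rw [this]
    ring


theorem chain_anti (S : ℕ) (g : ℕ → ℝ) (hg : ∀ k, 1 ≤ k → k ≤ S - 1 → g (k + 1) ≤ g k) :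
    ∀ a b, 1 ≤ a → a ≤ b → b ≤ S → g b ≤ g a := by
  intro a b ha hab hbS
  induction b, hab using Nat.le_induction with
  | base => exact le_rfl
  | succ n hn ih =>
    exact le_trans (hg n (by omega) (by omega)) (ih (by omega))

theorem C_offdiag_nonneg (S : ℕ) (lam mu : ℕ → ℝ → ℝ) (d : ℕ → ℝ)
    (hd : ∀ k, 1 ≤ k → k ≤ S → 0 < d k) (t : ℝ)
    (hlamm : ∀ k, 1 ≤ k → k ≤ S - 1 → lam (k + 1) t ≤ lam k t)
    (hmum : ∀ k, 1 ≤ k → k ≤ S - 1 → mu (k + 1) t ≤ mu k t)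
    (i j : Fin S) (hij : i ≠ j) :
    0 ≤ (triD S d * szkB S lam mu t * (triD S d)⁻¹) i j := by
  rw [C_apply S lam mu d hd t i j]
  refine mul_nonneg (mul_nonneg (hd _ (by omega) (by omega)).le
    (inv_nonneg.mpr (hd _ (by omega) (by omega)).le)) ?_
  have hij' : (i : ℕ) ≠ (j : ℕ) := fun h => hij (Fin.ext h)
  rcases lt_or_gt_of_ne hij' with h | h
  · -- i < j : mu case
    rw [qs_of_le S lam mu t ((i : ℕ) + 1) ((j : ℕ) + 1) (by omega) (by omega) (by omega),
      qs_of_le S lam mu t ((i : ℕ) + 1) (j : ℕ) (by omega) (by omega) (by omega)]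
    have e1 : (j : ℕ) + 1 - ((i : ℕ) + 1) + 1 = (j : ℕ) - (i : ℕ) + 1 := by omega
    have e2 : (j : ℕ) - ((i : ℕ) + 1) + 1 = (j : ℕ) - (i : ℕ) := by omega
    rw [e1, e2]
    have h1 : ∑ m ∈ Finset.Icc ((j : ℕ) - (i : ℕ)) (j : ℕ), mu m t
        = mu ((j : ℕ) - (i : ℕ)) t + ∑ m ∈ Finset.Icc ((j : ℕ) - (i : ℕ) + 1) (j : ℕ), mu m t := by
      rw [← Finset.Ico_add_one_right_eq_Icc, Finset.sum_eq_sum_Ico_succ_bot (by omega), Finset.Ico_add_one_right_eq_Icc]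
    have h2 : ∑ m ∈ Finset.Icc ((j : ℕ) - (i : ℕ) + 1) ((j : ℕ) + 1), mu m t
        = (∑ m ∈ Finset.Icc ((j : ℕ) - (i : ℕ) + 1) (j : ℕ), mu m t) + mu ((j : ℕ) + 1) t := by
      rw [Finset.sum_Icc_succ_top (by omega)]
    have h3 : mu ((j : ℕ) + 1) t ≤ mu ((j : ℕ) - (i : ℕ)) t :=
      chain_anti S (fun k => mu k t) hmum _ _ (by omega) (by omega) (by omega)
    rw [h1, h2]
    linarith
  · -- j < i : lam case
    rw [qs_of_gt S lam mu t ((i : ℕ) + 1) ((j : ℕ) + 1) (by omega) (by omega),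
      qs_of_gt S lam mu t ((i : ℕ) + 1) (j : ℕ) (by omega) (by omega)]
    have e1 : (i : ℕ) + 1 - ((j : ℕ) + 1) = (i : ℕ) - (j : ℕ) := by omega
    have e2 : (i : ℕ) + 1 - (j : ℕ) = (i : ℕ) - (j : ℕ) + 1 := by omega
    have e3 : S - (j : ℕ) = (S - (j : ℕ) - 1) + 1 := by omega
    have e4 : S - ((j : ℕ) + 1) = S - (j : ℕ) - 1 := by omega
    rw [e1, e2, e3, e4]
    have h1 : ∑ m ∈ Finset.Icc ((i : ℕ) - (j : ℕ)) (S - (j : ℕ) - 1), lam m t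
        = lam ((i : ℕ) - (j : ℕ)) t
          + ∑ m ∈ Finset.Icc ((i : ℕ) - (j : ℕ) + 1) (S - (j : ℕ) - 1), lam m t := by
      rw [← Finset.Ico_add_one_right_eq_Icc, Finset.sum_eq_sum_Ico_succ_bot (by omega), Finset.Ico_add_one_right_eq_Icc]
    have h2 : ∑ m ∈ Finset.Icc ((i : ℕ) - (j : ℕ) + 1) (S - (j : ℕ) - 1 + 1), lam m t
        = (∑ m ∈ Finset.Icc ((i : ℕ) - (j : ℕ) + 1) (S - (j : ℕ) - 1), lam m t)
          + lam (S - (j : ℕ) - 1 + 1) t := by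
      rw [Finset.sum_Icc_succ_top (by omega)]
    have h3 : lam (S - (j : ℕ) - 1 + 1) t ≤ lam ((i : ℕ) - (j : ℕ)) t :=
      chain_anti S (fun k => lam k t) hlamm _ _ (by omega) (by omega) (by omega)
    rw [h1, h2]
    linarith


theorem arow_contOn (S : ℕ) (lam mu : ℕ → ℝ → ℝ)
    (hlamc : ∀ k, 1 ≤ k → k ≤ S → ContinuousOn (lam k) (Ici 0))
    (hmuc : ∀ k, 1 ≤ k → k ≤ S → ContinuousOn (mu k) (Ici 0))
    (k j : ℕ) (hk1 : 1 ≤ k) (hkS : k ≤ S) (hj : j ≤ S) :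
    ContinuousOn (fun t => arow S lam mu t k j) (Ici 0) := by
  by_cases h1 : j < k
  · simp only [arow, if_pos h1]
    exact hlamc _ (by omega) (by omega)
  · by_cases h2 : k < j
    · simp only [arow, if_neg h1, if_pos h2]
      exact hmuc _ (by omega) (by omega)
    · simp only [arow, if_neg h1, if_neg h2]
      refine ContinuousOn.neg (ContinuousOn.add ?_ ?_)
      · refine continuousOn_finset_sum _ fun m hm => ?_
        simp only [Finset.mem_Icc] at hm
        exact hmuc _ (by omega) (by omega)
      · refine continuousOn_finset_sum _ fun m hm => ?_
        simp only [Finset.mem_Icc] at hm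
        exact hlamc _ (by omega) (by omega)

theorem qs_contOn (S : ℕ) (lam mu : ℕ → ℝ → ℝ)
    (hlamc : ∀ k, 1 ≤ k → k ≤ S → ContinuousOn (lam k) (Ici 0))
    (hmuc : ∀ k, 1 ≤ k → k ≤ S → ContinuousOn (mu k) (Ici 0))
    (i j : ℕ) (hi : 1 ≤ i) (hj : j ≤ S) :
    ContinuousOn (fun t => qs S lam mu t i j) (Ici 0) := by
  simp only [qs]
  refine continuousOn_finset_sum _ fun k hk => ?_
  simp only [Finset.mem_Icc] at hk
  exact arow_contOn S lam mu hlamc hmuc k j (by omega) (by omega) hj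

theorem C_contOn (S : ℕ) (lam mu : ℕ → ℝ → ℝ) (d : ℕ → ℝ)
    (hd : ∀ k, 1 ≤ k → k ≤ S → 0 < d k)
    (hlamc : ∀ k, 1 ≤ k → k ≤ S → ContinuousOn (lam k) (Ici 0))
    (hmuc : ∀ k, 1 ≤ k → k ≤ S → ContinuousOn (mu k) (Ici 0))
    (i j : Fin S) :
    ContinuousOn (fun t => (triD S d * szkB S lam mu t * (triD S d)⁻¹) i j) (Ici 0) := by
  have heq : (fun t => (triD S d * szkB S lam mu t * (triD S d)⁻¹) i j)
      = fun t => d ((i : ℕ) + 1) * (d ((j : ℕ) + 1))⁻¹ *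
          (qs S lam mu t ((i : ℕ) + 1) ((j : ℕ) + 1) - qs S lam mu t ((i : ℕ) + 1) (j : ℕ)) :=
    funext fun t => C_apply S lam mu d hd t i j
  rw [heq]
  exact continuousOn_const.mul
    ((qs_contOn S lam mu hlamc hmuc _ _ (by omega) (by omega)).sub
      (qs_contOn S lam mu hlamc hmuc _ _ (by omega) (by omega)))


theorem sum_abs_perturb {S : ℕ} (C : Matrix (Fin S) (Fin S) ℝ) (v : Fin S → ℝ) (h β : ℝ)
    (hdiag : ∀ j, 0 ≤ 1 + h * C j j) (hoff : ∀ i j, i ≠ j → 0 ≤ h * C i j)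
    (hcol : ∀ j, 1 + h * ∑ i, C i j ≤ 1 - h * β) :
    ∑ i, |v i + h * C.mulVec v i| ≤ (1 - h * β) * ∑ i, |v i| := by
  have hrep : ∀ i, v i + h * C.mulVec v i
      = ∑ j, ((if i = j then (1 : ℝ) else 0) + h * C i j) * v j := by
    intro i
    have h1 : ∑ j, ((if i = j then (1 : ℝ) else 0) + h * C i j) * v j
        = (∑ j, (if i = j then (1 : ℝ) else 0) * v j) + ∑ j, h * (C i j * v j) := by
      rw [← Finset.sum_add_distrib]
      exact Finset.sum_congr rfl fun j _ => by ring
    have h2 : ∑ j, (if i = j then (1 : ℝ) else 0) * v j = v i := by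
      have : ∀ j, (if i = j then (1 : ℝ) else 0) * v j = if j = i then v j else 0 := by
        intro j
        by_cases hij : i = j
        · subst hij; simp
        · simp [hij, Ne.symm hij]
      rw [Finset.sum_congr rfl fun j _ => this j, Finset.sum_ite_eq' Finset.univ i v,
        if_pos (Finset.mem_univ i)]
    have h3 : ∑ j, h * (C i j * v j) = h * C.mulVec v i := by
      rw [← Finset.mul_sum]
      rfl
    rw [h1, h2, h3]
  have hentry : ∀ i j, 0 ≤ (if i = j then (1 : ℝ) else 0) + h * C i j := by
    intro i j
    by_cases hij : i = j
    · subst hij; simpa using hdiag i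
    · simpa [hij] using hoff i j hij
  calc ∑ i, |v i + h * C.mulVec v i|
      ≤ ∑ i, ∑ j, ((if i = j then (1 : ℝ) else 0) + h * C i j) * |v j| := by
        refine Finset.sum_le_sum fun i _ => ?_
        rw [hrep i]
        refine le_trans (Finset.abs_sum_le_sum_abs _ _) (Finset.sum_le_sum fun j _ => ?_)
        rw [abs_mul, abs_of_nonneg (hentry i j)]
    _ = ∑ j, (∑ i, ((if i = j then (1 : ℝ) else 0) + h * C i j)) * |v j| := by
        rw [Finset.sum_comm]
        exact Finset.sum_congr rfl fun j _ => (Finset.sum_mul _ _ _).symm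
    _ ≤ ∑ j, (1 - h * β) * |v j| := by
        refine Finset.sum_le_sum fun j _ => mul_le_mul_of_nonneg_right ?_ (abs_nonneg _)
        have : ∑ i, ((if i = j then (1 : ℝ) else 0) + h * C i j)
            = 1 + h * ∑ i, C i j := by
          rw [Finset.sum_add_distrib, ← Finset.mul_sum, Finset.sum_ite_eq' Finset.univ j
            (fun _ => (1 : ℝ)), if_pos (Finset.mem_univ j)]
        rw [this]
        exact hcol j
    _ = (1 - h * β) * ∑ i, |v i| := (Finset.mul_sum _ _ _).symm

end SzkAux

/-- Theorem 3 (upper bound and weak ergodicity) for the SZK model with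
nonincreasing arrival and service rates. -/
theorem szk_upper_bound_and_ergodicity
    (S : ℕ) (hS : 1 ≤ S)
    (lam mu : ℕ → ℝ → ℝ) (d : ℕ → ℝ)
    (hlam : ∀ k, 1 ≤ k → k ≤ S →
      ContinuousOn (lam k) (Ici 0) ∧ ∀ t ∈ Ici (0 : ℝ), 0 ≤ lam k t)
    (hmu : ∀ k, 1 ≤ k → k ≤ S →
      ContinuousOn (mu k) (Ici 0) ∧ ∀ t ∈ Ici (0 : ℝ), 0 ≤ mu k t)
    (hmono : ∀ k, 1 ≤ k → k ≤ S - 1 → ∀ t ∈ Ici (0 : ℝ),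
      lam (k + 1) t ≤ lam k t ∧ mu (k + 1) t ≤ mu k t)
    (hd : ∀ k, 1 ≤ k → k ≤ S → 0 < d k)
    (alpha : Fin S → ℝ → ℝ)
    (halpha : ∀ k t, alpha k t = -∑ i, (triD S d * szkB S lam mu t * (triD S d)⁻¹) i k)
    (bstar : ℝ → ℝ) (hbstar : ∀ t, bstar t = ⨅ k, alpha k t)
    (f : ℝ → Fin S → ℝ) (hf : ∀ t, ∀ i : Fin S, f t i = lam ((i : ℕ) + 1) t)
    (z₁ z₂ : ℝ → Fin S → ℝ)
    (hz₁ : ∀ t ∈ Ici (0 : ℝ), ∀ i, HasDerivWithinAt (fun s => z₁ s i)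
      ((szkB S lam mu t).mulVec (z₁ t) i + f t i) (Ici 0) t)
    (hz₂ : ∀ t ∈ Ici (0 : ℝ), ∀ i, HasDerivWithinAt (fun s => z₂ s i)
      ((szkB S lam mu t).mulVec (z₂ t) i + f t i) (Ici 0) t) :
    (∀ t ∈ Ici (0 : ℝ),
      ∑ i, |(triD S d).mulVec (z₁ t - z₂ t) i| ≤
        Real.exp (-∫ τ in (0 : ℝ)..t, bstar τ) *
          ∑ i, |(triD S d).mulVec (z₁ 0 - z₂ 0) i|) ∧
    (Tendsto (fun T => ∫ τ in (0 : ℝ)..T, bstar τ) atTop atTop →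
      Tendsto (fun t => ∑ i, |z₁ t i - z₂ t i|) atTop (nhds 0)) := by
  haveI : Nonempty (Fin S) := ⟨⟨0, hS⟩⟩
  have hinv : (triD S d)⁻¹ = SzkAux.triE S d := SzkAux.triD_inv S d hd
  have hED : SzkAux.triE S d * triD S d = 1 := SzkAux.triE_mul_triD S d hd
  set Cm : ℝ → Matrix (Fin S) (Fin S) ℝ :=
    fun s => triD S d * szkB S lam mu s * (triD S d)⁻¹ with hCm
  set V : ℝ → ℝ := fun s => ∑ i, |(triD S d).mulVec (z₁ s - z₂ s) i| with hVdef
  have hlamc : ∀ k, 1 ≤ k → k ≤ S → ContinuousOn (lam k) (Ici 0) :=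
    fun k h1 h2 => (hlam k h1 h2).1
  have hmuc : ∀ k, 1 ≤ k → k ≤ S → ContinuousOn (mu k) (Ici 0) :=
    fun k h1 h2 => (hmu k h1 h2).1
  have hCcont : ∀ i j : Fin S, ContinuousOn (fun s => Cm s i j) (Ici 0) :=
    fun i j => SzkAux.C_contOn S lam mu d hd hlamc hmuc i j
  have halpha_cont : ∀ k : Fin S, ContinuousOn (alpha k) (Ici 0) := by
    intro k
    have he : alpha k = fun s => -∑ i, Cm s i k := funext fun s => halpha k s
    rw [he]
    exact (continuousOn_finset_sum _ fun i _ => hCcont i k).neg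
  have hbc : ContinuousOn bstar (Ici 0) := by
    have he : bstar = fun s => Finset.univ.inf' Finset.univ_nonempty (fun k => alpha k s) := by
      funext s
      rw [hbstar s, Finset.inf'_univ_eq_ciInf]
    rw [he]
    exact ContinuousOn.finset_inf'_apply Finset.univ_nonempty fun k _ => halpha_cont k
  have hbstar_le : ∀ (k : Fin S) (s : ℝ), bstar s ≤ alpha k s := by
    intro k s
    rw [hbstar s]
    exact ciInf_le (Set.Finite.bddBelow (Set.finite_range _)) k
  have hcolsum : ∀ (s : ℝ) (k : Fin S), ∑ i, Cm s i k = -(alpha k s) := by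
    intro s k
    have := halpha k s
    linarith
  -- derivative of components of u = D (z₁ - z₂)
  have hwder : ∀ x ∈ Ici (0 : ℝ), ∀ j : Fin S, HasDerivWithinAt (fun s => z₁ s j - z₂ s j)
      ((szkB S lam mu x).mulVec (z₁ x - z₂ x) j) (Ici 0) x := by
    intro x hx j
    have h := (hz₁ x hx j).sub (hz₂ x hx j)
    have e : (szkB S lam mu x).mulVec (z₁ x) j + f x j
          - ((szkB S lam mu x).mulVec (z₂ x) j + f x j)
        = (szkB S lam mu x).mulVec (z₁ x - z₂ x) j := by
      rw [Matrix.mulVec_sub, Pi.sub_apply]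
      ring
    exact e ▸ h
  have hu' : ∀ x ∈ Ici (0 : ℝ), ∀ i : Fin S,
      HasDerivWithinAt (fun s => (triD S d).mulVec (z₁ s - z₂ s) i)
        ((Cm x).mulVec ((triD S d).mulVec (z₁ x - z₂ x)) i) (Ici 0) x := by
    intro x hx i
    have h2 : HasDerivWithinAt (fun s => ∑ j, triD S d i j * (z₁ s j - z₂ s j))
        (∑ j, triD S d i j * (szkB S lam mu x).mulVec (z₁ x - z₂ x) j) (Ici 0) x :=
      HasDerivWithinAt.fun_sum fun j _ => (hwder x hx j).const_mul _
    have e1 : (fun s => (triD S d).mulVec (z₁ s - z₂ s) i)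
        = fun s => ∑ j, triD S d i j * (z₁ s j - z₂ s j) := by
      funext s
      simp [Matrix.mulVec, dotProduct, Pi.sub_apply, mul_sub, Finset.sum_sub_distrib]
    have e2 : (Cm x).mulVec ((triD S d).mulVec (z₁ x - z₂ x)) i
        = ∑ j, triD S d i j * (szkB S lam mu x).mulVec (z₁ x - z₂ x) j := by
      have e3 : (Cm x).mulVec ((triD S d).mulVec (z₁ x - z₂ x))
          = (triD S d).mulVec ((szkB S lam mu x).mulVec (z₁ x - z₂ x)) := by
        rw [hCm]
        beta_reduce
        rw [Matrix.mulVec_mulVec, Matrix.mulVec_mulVec, hinv,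
          mul_assoc (triD S d * szkB S lam mu x), hED, mul_one]
      rw [e3]
      simp [Matrix.mulVec, dotProduct]
    rw [e1, e2]
    exact h2
  have hVcont : ContinuousOn V (Ici 0) := by
    rw [hVdef]
    refine continuousOn_finset_sum _ fun i _ => ContinuousOn.abs ?_
    exact fun x hx => (hu' x hx i).continuousWithinAt
  have hV0 : 0 ≤ V 0 := Finset.sum_nonneg fun i _ => abs_nonneg _
  -- the main bound
  have key : ∀ t ∈ Ici (0 : ℝ), V t ≤ Real.exp (-∫ τ in (0 : ℝ)..t, bstar τ) * V 0 := by
    intro t ht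
    rw [mem_Ici] at ht
    have hbint : ∀ s : ℝ, 0 ≤ s → IntervalIntegrable bstar MeasureTheory.volume 0 s := by
      intro s hs
      refine ContinuousOn.intervalIntegrable (hbc.mono ?_)
      rw [uIcc_of_le hs]
      exact Icc_subset_Ici_self
    have hIcont : ContinuousOn (fun s => ∫ τ in (0 : ℝ)..s, bstar τ) (Icc 0 t) := by
      have hint : MeasureTheory.IntegrableOn bstar (uIcc (0 : ℝ) t) MeasureTheory.volume := by
        rw [uIcc_of_le ht]
        exact (hbc.mono Icc_subset_Ici_self).integrableOn_Icc
      have := intervalIntegral.continuousOn_primitive_interval hint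
      rwa [uIcc_of_le ht] at this
    have hIderiv : ∀ x ∈ Ico (0 : ℝ) t,
        HasDerivWithinAt (fun s => ∫ τ in (0 : ℝ)..s, bstar τ) (bstar x) (Ici x) x := by
      intro x hx
      have hsub : Ioi x ⊆ Ici (0 : ℝ) := fun y hy => le_of_lt (lt_of_le_of_lt hx.1 hy)
      refine intervalIntegral.integral_hasDerivWithinAt_right (hbint x hx.1)
        ⟨Ici 0, Filter.mem_of_superset self_mem_nhdsWithin hsub,
          hbc.aestronglyMeasurable measurableSet_Ici⟩
        ((hbc x hx.1).mono hsub)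
    -- ε-approximation
    have hstep : ∀ ε : ℝ, 0 < ε →
        V t ≤ Real.exp (-(∫ τ in (0 : ℝ)..t, bstar τ) + ε * t) * (V 0 + ε) := by
      intro ε hε
      have hmain : ∀ ⦃x⦄, x ∈ Icc (0 : ℝ) t → V x ≤
          (fun s => Real.exp (-(∫ τ in (0 : ℝ)..s, bstar τ) + ε * s) * (V 0 + ε)) x := by
        refine image_le_of_liminf_slope_right_lt_deriv_boundary'
          (f := V) (f' := fun x => -bstar x * V x) (hVcont.mono Icc_subset_Ici_self)
          ?_ ?_ ?_
          (B' := fun x => (Real.exp (-(∫ τ in (0 : ℝ)..x, bstar τ) + ε * x)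
            * (-(bstar x) + ε)) * (V 0 + ε)) ?_ ?_
        · -- the liminf slope estimate
          intro x hx r hr
          have hr' : -bstar x * V x < r := hr
          have hx0 : (0 : ℝ) ≤ x := hx.1
          have hmem : x ∈ Ici (0 : ℝ) := mem_Ici.mpr hx0
          set ux : Fin S → ℝ := (triD S d).mulVec (z₁ x - z₂ x) with hux
          set c : Fin S → ℝ := (Cm x).mulVec ux with hc
          set M : ℝ := ∑ j : Fin S, |Cm x j j| with hM
          have hMnn : 0 ≤ M := Finset.sum_nonneg fun j _ => abs_nonneg _
          have hMpos : 0 < 1 + M := by linarith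
          set h₀ : ℝ := (1 + M)⁻¹ with hh₀
          have h₀pos : 0 < h₀ := inv_pos.mpr hMpos
          have hslope : ∀ i : Fin S,
              Tendsto (slope (fun s => (triD S d).mulVec (z₁ s - z₂ s) i) x)
                (nhdsWithin x (Ioi x)) (nhds (c i)) := by
            intro i
            have h := (hu' x hmem i).mono (Ici_subset_Ici.mpr hx0)
            have h2 := hasDerivWithinAt_iff_tendsto_slope.mp h
            rwa [Set.Ici_sdiff_left] at h2
          have hE : Tendsto (fun z => ∑ i : Fin S,
              |slope (fun s => (triD S d).mulVec (z₁ s - z₂ s) i) x z - c i|)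
              (nhdsWithin x (Ioi x)) (nhds 0) := by
            have h := tendsto_finset_sum Finset.univ
              (fun i _ => (((hslope i).sub tendsto_const_nhds).abs :
                Tendsto _ _ (nhds |c i - c i|)))
            simpa using h
          have hev1 : ∀ᶠ z in nhdsWithin x (Ioi x),
              (∑ i : Fin S, |slope (fun s => (triD S d).mulVec (z₁ s - z₂ s) i) x z - c i|)
                < r - (-bstar x * V x) :=
            hE.eventually (gt_mem_nhds (by linarith [hr']))
          have hev2 : ∀ᶠ z in nhdsWithin x (Ioi x), z ∈ Ioc x (x + h₀) :=
            Ioc_mem_nhdsGT_of_mem ⟨le_refl x, by linarith⟩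
          refine ((hev1.and hev2).mono ?_).frequently
          rintro z ⟨hz1, hz2⟩
          obtain ⟨hxz, hzh⟩ := hz2
          have hh : 0 < z - x := by linarith
          -- pointwise bound
          have key1 : ∀ i : Fin S, |(triD S d).mulVec (z₁ z - z₂ z) i|
              ≤ |ux i + (z - x) * c i|
                + (z - x) * |slope (fun s => (triD S d).mulVec (z₁ s - z₂ s) i) x z - c i| := by
            intro i
            have e : (triD S d).mulVec (z₁ z - z₂ z) i
                = (ux i + (z - x) * c i)
                  + ((z - x) * (slope (fun s => (triD S d).mulVec (z₁ s - z₂ s) i) x z - c i)) := by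
              rw [slope_def_field, hux]
              field_simp
              ring
            rw [e]
            refine le_trans (abs_add_le _ _) ?_
            rw [abs_mul, abs_of_pos hh]
          have key2 : ∑ i, |ux i + (z - x) * c i| ≤ (1 - (z - x) * bstar x) * V x := by
            have hb : V x = ∑ i, |ux i| := rfl
            rw [hc, hb]
            refine SzkAux.sum_abs_perturb (Cm x) ux (z - x) (bstar x) ?_ ?_ ?_
            · intro j
              have hCj : |Cm x j j| ≤ M := by
                rw [hM]
                exact Finset.single_le_sum (f := fun j' : Fin S => |Cm x j' j'|)
                  (fun j' _ => abs_nonneg _) (Finset.mem_univ j)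
              have h1 : (z - x) * |Cm x j j| ≤ h₀ * (1 + M) := by
                have h2 : z - x ≤ h₀ := by linarith
                nlinarith [abs_nonneg (Cm x j j)]
              rw [hh₀, inv_mul_cancel₀ hMpos.ne'] at h1
              have := neg_abs_le (Cm x j j)
              nlinarith
            · intro i j hij
              refine mul_nonneg hh.le ?_
              exact SzkAux.C_offdiag_nonneg S lam mu d hd x
                (fun k h1 h2 => (hmono k h1 h2 x hmem).1)
                (fun k h1 h2 => (hmono k h1 h2 x hmem).2) i j hij
            · intro j
              rw [hcolsum x j]
              have := hbstar_le j x
              nlinarith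
          -- combine
          have hVz : V z ≤ (1 - (z - x) * bstar x) * V x
              + (z - x) * ∑ i : Fin S,
                  |slope (fun s => (triD S d).mulVec (z₁ s - z₂ s) i) x z - c i| := by
            have h1 : V z ≤ ∑ i, (|ux i + (z - x) * c i|
                + (z - x) * |slope (fun s => (triD S d).mulVec (z₁ s - z₂ s) i) x z - c i|) :=
              Finset.sum_le_sum fun i _ => key1 i
            rw [Finset.sum_add_distrib, ← Finset.mul_sum] at h1
            linarith [key2]
          have hslopeV : slope V x z < r := by
            rw [slope_def_field]
            rw [div_lt_iff₀ hh]
            have hVx : V x = V x := rfl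
            nlinarith [hVz, hz1]
          exact hslopeV
        · -- V 0 ≤ B 0
          simp only [intervalIntegral.integral_same, mul_zero, neg_zero, add_zero, zero_add,
            Real.exp_zero, one_mul]
          linarith
        · -- continuity of B
          refine ContinuousOn.mul ?_ continuousOn_const
          refine Real.continuous_exp.comp_continuousOn ?_
          exact hIcont.neg.add (continuous_const.mul continuous_id).continuousOn
        · -- derivative of B
          intro x hx
          have h1 := hIderiv x hx
          have h2 : HasDerivWithinAt (fun s => -(∫ τ in (0 : ℝ)..s, bstar τ) + ε * s)
              (-(bstar x) + ε) (Ici x) x := by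
            refine HasDerivWithinAt.add h1.neg ?_
            simpa using (hasDerivWithinAt_id x (Ici x)).const_mul ε
          exact (h2.exp).mul_const (V 0 + ε)
        · -- the strict inequality at contact points
          intro x hx hVB
          have hexp : 0 < Real.exp (-(∫ τ in (0 : ℝ)..x, bstar τ) + ε * x) := Real.exp_pos _
          have hBpos : 0 < Real.exp (-(∫ τ in (0 : ℝ)..x, bstar τ) + ε * x) * (V 0 + ε) := by
            nlinarith
          show -bstar x * V x < Real.exp (-(∫ τ in (0 : ℝ)..x, bstar τ) + ε * x)
            * (-bstar x + ε) * (V 0 + ε)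
          rw [hVB]
          nlinarith
      have := hmain (right_mem_Icc.mpr ht)
      simpa using this
    have hlim : Tendsto (fun ε => Real.exp (-(∫ τ in (0 : ℝ)..t, bstar τ) + ε * t) * (V 0 + ε))
        (nhdsWithin 0 (Ioi 0)) (nhds (Real.exp (-∫ τ in (0 : ℝ)..t, bstar τ) * V 0)) := by
      have hcont : Continuous fun ε : ℝ =>
          Real.exp (-(∫ τ in (0 : ℝ)..t, bstar τ) + ε * t) * (V 0 + ε) :=
        (Real.continuous_exp.comp
          (continuous_const.add (continuous_id.mul continuous_const))).mul
          (continuous_const.add continuous_id)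
      have h0 := hcont.tendsto 0
      simp only [zero_mul, add_zero] at h0
      exact h0.mono_left nhdsWithin_le_nhds
    exact ge_of_tendsto hlim
      (eventually_mem_nhdsWithin.mono fun ε hε => hstep ε hε)
  refine ⟨key, ?_⟩
  -- part 2
  intro hI
  have hexp : Tendsto (fun T => Real.exp (-(∫ τ in (0 : ℝ)..T, bstar τ))) atTop (nhds 0) :=
    Real.tendsto_exp_atBot.comp (tendsto_neg_atTop_atBot.comp hI)
  set K : ℝ := ∑ i : Fin S, ∑ j : Fin S, |SzkAux.triE S d i j| with hK
  have hKnn : 0 ≤ K :=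
    Finset.sum_nonneg fun i _ => Finset.sum_nonneg fun j _ => abs_nonneg _
  have hwle : ∀ s : ℝ, ∑ i, |z₁ s i - z₂ s i| ≤ K * V s := by
    intro s
    have hrec : ∀ i : Fin S, z₁ s i - z₂ s i
        = ∑ j, SzkAux.triE S d i j * (triD S d).mulVec (z₁ s - z₂ s) j := by
      intro i
      have h1 : (SzkAux.triE S d).mulVec ((triD S d).mulVec (z₁ s - z₂ s)) = z₁ s - z₂ s := by
        rw [Matrix.mulVec_mulVec, hED, Matrix.one_mulVec]
      have h2 : z₁ s i - z₂ s i
          = (SzkAux.triE S d).mulVec ((triD S d).mulVec (z₁ s - z₂ s)) i := by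
        rw [h1, Pi.sub_apply]
      rw [h2]
      simp [Matrix.mulVec, dotProduct]
    calc ∑ i, |z₁ s i - z₂ s i|
        ≤ ∑ i : Fin S, ∑ j : Fin S,
            |SzkAux.triE S d i j| * |(triD S d).mulVec (z₁ s - z₂ s) j| := by
          refine Finset.sum_le_sum fun i _ => ?_
          rw [hrec i]
          refine le_trans (Finset.abs_sum_le_sum_abs _ _)
            (le_of_eq (Finset.sum_congr rfl fun j _ => abs_mul _ _))
      _ ≤ ∑ i : Fin S, ∑ j : Fin S, |SzkAux.triE S d i j| * V s := by
          refine Finset.sum_le_sum fun i _ => Finset.sum_le_sum fun j _ => ?_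
          refine mul_le_mul_of_nonneg_left ?_ (abs_nonneg _)
          exact Finset.single_le_sum
            (f := fun j' : Fin S => |(triD S d).mulVec (z₁ s - z₂ s) j'|)
            (fun j' _ => abs_nonneg _) (Finset.mem_univ j)
      _ = K * V s := by
          rw [hK, Finset.sum_mul]
          exact Finset.sum_congr rfl fun i _ => (Finset.sum_mul _ _ _).symm
  refine squeeze_zero' (Filter.Eventually.of_forall fun s =>
      Finset.sum_nonneg fun i _ => abs_nonneg _) ?_ ?_
    (g := fun T => K * (Real.exp (-(∫ τ in (0 : ℝ)..T, bstar τ)) * V 0))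
  · filter_upwards [eventually_ge_atTop (0 : ℝ)] with T hT
    exact (hwle T).trans (mul_le_mul_of_nonneg_left (key T (mem_Ici.mpr hT)) hKnn)
  · have h := (hexp.mul_const (V 0)).const_mul K
    simpa using h
end

section
/- (Theorem 3, lower bound for the SZK model.) In the SZK setting, assume λ_{k+1}(t) ≤ λ_k(t) and μ_{k+1}(t) ≤ μ_k(t) for all 1 ≤ k ≤ S−1 and all t ≥ 0. Set α_k(t) = −∑_{i=1}^S (D B(t) D⁻¹)_{ik} for 1 ≤ k ≤ S and β_*(t) = max_{1≤k≤S} α_k(t). Let z*, z** : [0,∞) → ℝ^S be differentiable with z'(t) = B(t)z(t) + f(t) for all t ≥ 0, where f(t)_i = λ_i(t). If D(z*(0) − z**(0)) ≥ 0 componentwise, then ‖D(z*(t) − z**(t))‖₁ ≥ exp(−∫₀ᵗ β_*(τ) dτ) · ‖D(z*(0) − z**(0))‖₁ for all t ≥ 0. -/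
open Set Filter Topology

noncomputable def triE (S : ℕ) (d : ℕ → ℝ) : Matrix (Fin S) (Fin S) ℝ :=
  fun i j => (if i = j then (d ((j : ℕ) + 1))⁻¹ else 0) +
    (if (j : ℕ) = (i : ℕ) + 1 then -(d ((j : ℕ) + 1))⁻¹ else 0)

/-- Generic: multiply a row-vector-like function against the two-diagonal `triE` column. -/
lemma sum_mul_triE_col {S : ℕ} (d : ℕ → ℝ) (g : Fin S → ℝ) (j : Fin S) :
    (∑ m : Fin S, g m * triE S d m j) =
      g j * (d ((j : ℕ) + 1))⁻¹ -
        (if h : 1 ≤ (j : ℕ) then g ⟨(j : ℕ) - 1, by omega⟩ * (d ((j : ℕ) + 1))⁻¹ else 0) := by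
  simp only [triE, mul_add]
  rw [Finset.sum_add_distrib]
  have h1 : (∑ m : Fin S, g m * if m = j then (d ((j:ℕ)+1))⁻¹ else 0) = g j * (d ((j:ℕ)+1))⁻¹ := by
    rw [Finset.sum_eq_single j]
    · simp
    · intro b _ hb; simp [hb]
    · simp
  have h2 : (∑ m : Fin S, g m * if (j : ℕ) = (m : ℕ) + 1 then -(d ((j:ℕ)+1))⁻¹ else 0) =
      -(if h : 1 ≤ (j : ℕ) then g ⟨(j : ℕ) - 1, by omega⟩ * (d ((j : ℕ) + 1))⁻¹ else 0) := by
    by_cases hj : 1 ≤ (j : ℕ)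
    · rw [Finset.sum_eq_single (⟨(j : ℕ) - 1, by omega⟩ : Fin S)]
      · simp only [hj, dif_pos]
        have : (j : ℕ) = ((⟨(j : ℕ) - 1, by omega⟩ : Fin S) : ℕ) + 1 := by simp; omega
        rw [if_pos this]; ring
      · intro b _ hb
        have : ¬ (j : ℕ) = (b : ℕ) + 1 := by
          intro hc; apply hb; apply Fin.ext; simp; omega
        simp [this]
      · simp
    · rw [Finset.sum_eq_zero, dif_neg hj, neg_zero]
      intro b _
      have : ¬ (j : ℕ) = (b : ℕ) + 1 := by omega
      simp [this]
  rw [h1, h2]; ring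

lemma triD_mul_triE (S : ℕ) (d : ℕ → ℝ) (hd : ∀ k, 1 ≤ k → k ≤ S → 0 < d k) :
    triD S d * triE S d = 1 := by
  ext i j
  rw [Matrix.mul_apply, sum_mul_triE_col]
  have hij : ∀ m : Fin S, triD S d i m = if i ≤ m then d ((i:ℕ)+1) else 0 := fun m => rfl
  rcases lt_trichotomy (i : ℕ) (j : ℕ) with h | h | h
  · have h1 : i ≤ j := by rw [Fin.le_def]; omega
    have hj1 : 1 ≤ (j : ℕ) := by omega
    have h2 : i ≤ (⟨(j : ℕ) - 1, by omega⟩ : Fin S) := by rw [Fin.le_def]; simp; omega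
    have hne : i ≠ j := by intro hc; rw [hc] at h; omega
    simp [triD, h1, hj1, h2, Matrix.one_apply, hne]
  · have h1 : i = j := Fin.ext h
    subst h1
    have hj1 : ¬ 1 ≤ (i : ℕ) ∨ True := Or.inr trivial
    have hd' : d ((i:ℕ)+1) ≠ 0 := ne_of_gt (hd _ (by omega) (by omega))
    by_cases hj : 1 ≤ (i : ℕ)
    · have h2 : ¬ i ≤ (⟨(i : ℕ) - 1, by omega⟩ : Fin S) := by rw [Fin.le_def]; simp; omega
      simp [triD, hj, h2, Matrix.one_apply, mul_inv_cancel₀ hd']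
    · simp [triD, hj, Matrix.one_apply, mul_inv_cancel₀ hd']
  · have h1 : ¬ i ≤ j := by rw [Fin.le_def]; omega
    have hne : i ≠ j := by intro hc; rw [hc] at h; omega
    have h2 : ∀ hh : 1 ≤ (j : ℕ), ¬ i ≤ (⟨(j : ℕ) - 1, by omega⟩ : Fin S) := by
      intro hh; rw [Fin.le_def]; simp; omega
    by_cases hj : 1 ≤ (j : ℕ)
    · simp [triD, h1, hj, h2 hj, Matrix.one_apply, hne]
    · simp [triD, h1, hj, Matrix.one_apply, hne]

lemma triD_det_isUnit (S : ℕ) (d : ℕ → ℝ) (hd : ∀ k, 1 ≤ k → k ≤ S → 0 < d k) :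
    IsUnit (triD S d).det := by
  have h := triD_mul_triE S d hd
  have := congrArg Matrix.det h
  rw [Matrix.det_mul, Matrix.det_one] at this
  exact IsUnit.of_mul_eq_one _ this

lemma triD_inv (S : ℕ) (d : ℕ → ℝ) (hd : ∀ k, 1 ≤ k → k ≤ S → 0 < d k) :
    (triD S d)⁻¹ = triE S d :=
  Matrix.inv_eq_right_inv (triD_mul_triE S d hd)

lemma triE_mul_triD (S : ℕ) (d : ℕ → ℝ) (hd : ∀ k, 1 ≤ k → k ≤ S → 0 < d k) :
    triE S d * triD S d = 1 :=
  mul_eq_one_comm.mp (triD_mul_triE S d hd)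

variable (S : ℕ) (lam mu : ℕ → ℝ → ℝ)

noncomputable def Anat (M J : ℕ) (t : ℝ) : ℝ :=
  if J < M then lam (M - J) t
  else if M < J then mu (J - M) t
  else -((∑ k ∈ Finset.Icc 1 M, mu k t) + ∑ k ∈ Finset.Icc 1 (S - M), lam k t)

-- szkB S lam mu t i j = Anat S lam mu (i+1) (j+1) t - lam (i+1) t

/-- reindex: `∑_{M∈Icc (a+1) b} g (M - a) = ∑_{r ∈ Icc 1 (b-a)} g r`. -/
lemma sum_shift (a b : ℕ) (g : ℕ → ℝ) :
    ∑ M ∈ Finset.Icc (a + 1) b, g (M - a) = ∑ r ∈ Finset.Icc 1 (b - a), g r := by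
  apply Finset.sum_bij' (fun M _ => M - a) (fun r _ => r + a)
  · intro M hM; simp only [Finset.mem_Icc] at *; omega
  · intro r hr; simp only [Finset.mem_Icc] at *; omega
  · intro M hM; simp only [Finset.mem_Icc] at hM; omega
  · intro r hr; simp only [Finset.mem_Icc] at hr; omega
  · intro M hM; rfl

/-- reverse reindex: `∑_{M∈Icc a (b-1)} g (b - M) = ∑_{r∈Icc 1 (b-a)} g r` for a ≤ b. -/
lemma sum_rev (a b : ℕ) (ha : 1 ≤ a) (hab : a ≤ b) (g : ℕ → ℝ) :
    ∑ M ∈ Finset.Icc a (b - 1), g (b - M) = ∑ r ∈ Finset.Icc 1 (b - a), g r := by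
  apply Finset.sum_bij' (fun M _ => b - M) (fun r _ => b - r)
  · intro M hM; simp only [Finset.mem_Icc] at *; omega
  · intro r hr; simp only [Finset.mem_Icc] at *; omega
  · intro M hM; simp only [Finset.mem_Icc] at hM; omega
  · intro r hr; simp only [Finset.mem_Icc] at hr; omega
  · intro M hM; rfl

/-- Closed form for column tail sums of `Anat`, for `1 ≤ I ≤ K ≤ S`. -/
lemma Fclosed (t : ℝ) (I K : ℕ) (hI : 1 ≤ I) (hIK : I ≤ K) (hK : K ≤ S) :
    ∑ M ∈ Finset.Icc I S, Anat S lam mu M K t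
      = -∑ r ∈ Finset.Icc (K - I + 1) K, mu r t := by
  have hsplit : Finset.Icc I S = Finset.Icc I K ∪ Finset.Icc (K+1) S := by
    ext x; simp only [Finset.mem_Icc, Finset.mem_union]; omega
  have hdisj : Disjoint (Finset.Icc I K) (Finset.Icc (K+1) S) := by
    rw [Finset.disjoint_left]; intro x hx hx'
    simp only [Finset.mem_Icc] at *; omega
  rw [hsplit, Finset.sum_union hdisj]
  have hIccK : Finset.Icc I K = Finset.Icc I (K-1) ∪ {K} := by
    ext x; simp only [Finset.mem_Icc, Finset.mem_union, Finset.mem_singleton]; omega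
  have hdisj2 : Disjoint (Finset.Icc I (K-1)) ({K} : Finset ℕ) := by
    rw [Finset.disjoint_left]; intro x hx hx'
    simp only [Finset.mem_Icc, Finset.mem_singleton] at *; omega
  rw [hIccK, Finset.sum_union hdisj2, Finset.sum_singleton]
  have e1 : ∑ M ∈ Finset.Icc I (K-1), Anat S lam mu M K t
      = ∑ r ∈ Finset.Icc 1 (K - I), mu r t := by
    rw [← sum_rev I K hI hIK (fun r => mu r t)]
    apply Finset.sum_congr rfl
    intro M hM; simp only [Finset.mem_Icc] at hM
    have h1 : M < K := by omega
    unfold Anat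
    rw [if_neg (by omega), if_pos h1]
  have e2 : Anat S lam mu K K t
      = -((∑ k ∈ Finset.Icc 1 K, mu k t) + ∑ k ∈ Finset.Icc 1 (S - K), lam k t) := by
    unfold Anat; rw [if_neg (by omega), if_neg (by omega)]
  have e3 : ∑ M ∈ Finset.Icc (K+1) S, Anat S lam mu M K t
      = ∑ r ∈ Finset.Icc 1 (S - K), lam r t := by
    rw [← sum_shift K S (fun r => lam r t)]
    apply Finset.sum_congr rfl
    intro M hM; simp only [Finset.mem_Icc] at hM
    unfold Anat; rw [if_pos (by omega)]
  rw [e1, e2, e3]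
  have e4 : (∑ r ∈ Finset.Icc 1 (K - I), mu r t) + ∑ r ∈ Finset.Icc (K-I+1) K, mu r t
      = ∑ k ∈ Finset.Icc 1 K, mu k t := by
    have hdj : Disjoint (Finset.Icc 1 (K - I)) (Finset.Icc (K-I+1) K) := by
      rw [Finset.disjoint_left]; intro x hx hx'
      simp only [Finset.mem_Icc] at hx hx'; omega
    rw [← Finset.sum_union hdj]
    congr 1
    ext x; simp only [Finset.mem_Icc, Finset.mem_union]; omega
  linarith

/-- Fin tail sums to ℕ Icc sums. -/
lemma sum_tail_fin {S : ℕ} (i : Fin S) (g : ℕ → ℝ) :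
    ∑ j ∈ Finset.univ.filter (fun j : Fin S => i ≤ j), g ((j : ℕ) + 1) =
      ∑ M ∈ Finset.Icc ((i : ℕ) + 1) S, g M := by
  apply Finset.sum_bij' (fun (j : Fin S) _ => (j : ℕ) + 1)
    (fun M hM => (⟨M - 1, by simp only [Finset.mem_Icc] at hM; omega⟩ : Fin S))
  case hi =>
    intro j hj
    simp only [Finset.mem_filter, Finset.mem_univ, true_and, Fin.le_def] at hj
    simp only [Finset.mem_Icc]; omega
  case hj =>
    intro M hM
    simp only [Finset.mem_Icc] at hM
    simp only [Finset.mem_filter, Finset.mem_univ, true_and, Fin.le_def]; omega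
  case left_neg => intro j hj; apply Fin.ext; simp
  case right_neg => intro M hM; simp only [Finset.mem_Icc] at hM; simp; omega
  case h => intro j hj; rfl

lemma szkB_apply (S : ℕ) (lam mu : ℕ → ℝ → ℝ) (t : ℝ) (j m : Fin S) :
    szkB S lam mu t j m = Anat S lam mu ((j : ℕ) + 1) ((m : ℕ) + 1) t - lam ((j : ℕ) + 1) t := by
  unfold szkB Anat
  rcases lt_trichotomy ((m : ℕ)) ((j : ℕ)) with h | h | h
  · rw [if_pos h, if_pos (by omega)]
    congr 2
    omega
  · rw [if_neg (by omega), if_neg (by omega), if_neg (by omega), if_neg (by omega)]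
  · rw [if_neg (by omega), if_pos h, if_neg (by omega), if_pos (by omega)]
    congr 2
    omega

lemma DB_apply (S : ℕ) (lam mu : ℕ → ℝ → ℝ) (d : ℕ → ℝ) (t : ℝ) (i m : Fin S) :
    (triD S d * szkB S lam mu t) i m =
      d ((i : ℕ) + 1) * ∑ M ∈ Finset.Icc ((i : ℕ) + 1) S,
        (Anat S lam mu M ((m : ℕ) + 1) t - lam M t) := by
  rw [Matrix.mul_apply, Finset.mul_sum,
    ← sum_tail_fin i (fun M => d ((i : ℕ) + 1) * (Anat S lam mu M ((m : ℕ) + 1) t - lam M t))]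
  rw [← Finset.sum_filter_of_ne (p := fun j : Fin S => i ≤ j)]
  · apply Finset.sum_congr rfl
    intro j hj
    simp only [Finset.mem_filter, Finset.mem_univ, true_and] at hj
    rw [szkB_apply]
    simp only [triD, if_pos hj]
  · intro j _ hne
    by_contra hle
    exact hne (by simp only [triD, if_neg hle, zero_mul])

/-- Entry formula for `C = D ⬝ B ⬝ E`. -/
lemma C_apply (S : ℕ) (lam mu : ℕ → ℝ → ℝ) (d : ℕ → ℝ) (t : ℝ) (i k : Fin S) :
    (triD S d * szkB S lam mu t * triE S d) i k =
      (triD S d * szkB S lam mu t) i k * (d ((k : ℕ) + 1))⁻¹ -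
        (if h : 1 ≤ (k : ℕ) then
          (triD S d * szkB S lam mu t) i ⟨(k : ℕ) - 1, by omega⟩ * (d ((k : ℕ) + 1))⁻¹ else 0) := by
  rw [Matrix.mul_apply]
  exact sum_mul_triE_col d (fun m => (triD S d * szkB S lam mu t) i m) k

lemma rate_anti (Sv : ℕ) (r : ℕ → ℝ → ℝ)
    (hm : ∀ k, 1 ≤ k → k ≤ Sv - 1 → ∀ t ∈ Ici (0 : ℝ), r (k + 1) t ≤ r k t)
    (t : ℝ) (ht : t ∈ Ici (0 : ℝ)) :
    ∀ a b : ℕ, 1 ≤ a → a ≤ b → b ≤ Sv → r b t ≤ r a t := by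
  intro a b ha hab hb
  induction b with
  | zero => omega
  | succ n ih =>
    rcases Nat.eq_or_lt_of_le hab with h | h
    · rw [h]
    · have h1 : r (n + 1) t ≤ r n t := hm n (by omega) (by omega) t ht
      exact le_trans h1 (ih (by omega) (by omega))

lemma C_offdiag_nonneg (S : ℕ) (hS : 1 ≤ S) (lam mu : ℕ → ℝ → ℝ) (d : ℕ → ℝ)
    (hmono : ∀ k, 1 ≤ k → k ≤ S - 1 → ∀ t ∈ Ici (0 : ℝ),
      lam (k + 1) t ≤ lam k t ∧ mu (k + 1) t ≤ mu k t)
    (hd : ∀ k, 1 ≤ k → k ≤ S → 0 < d k) :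
    ∀ t ∈ Ici (0 : ℝ), ∀ i k : Fin S, i ≠ k →
      0 ≤ (triD S d * szkB S lam mu t * triE S d) i k := by
  intro t ht i k hik
  have hdk : 0 < d ((k : ℕ) + 1) := hd _ (by omega) (by omega)
  have hdi : 0 < d ((i : ℕ) + 1) := hd _ (by omega) (by omega)
  have hlam_anti := rate_anti S lam (fun k h1 h2 t ht => (hmono k h1 h2 t ht).1) t ht
  have hmu_anti := rate_anti S mu (fun k h1 h2 t ht => (hmono k h1 h2 t ht).2) t ht
  rw [C_apply]
  rcases lt_or_gt_of_ne (fun h => hik (Fin.ext h)) with hki | hki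
  case inr =>
    -- k < i
    by_cases hk0 : 1 ≤ (k : ℕ)
    · rw [dif_pos hk0, DB_apply, DB_apply]
      have hcoe : ((⟨(k : ℕ) - 1, by omega⟩ : Fin S) : ℕ) + 1 = (k : ℕ) := by simp; omega
      rw [hcoe, ← sub_mul, ← mul_sub, ← Finset.sum_sub_distrib]
      apply mul_nonneg (mul_nonneg hdi.le _) (inv_nonneg.mpr hdk.le)
      apply Finset.sum_nonneg
      intro M hM
      simp only [Finset.mem_Icc] at hM
      have e1 : Anat S lam mu M ((k : ℕ) + 1) t = lam (M - ((k : ℕ) + 1)) t := by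
        unfold Anat; rw [if_pos (by omega)]
      have e2 : Anat S lam mu M (k : ℕ) t = lam (M - (k : ℕ)) t := by
        unfold Anat; rw [if_pos (by omega)]
      have e3 : M - (k : ℕ) = (M - ((k : ℕ) + 1)) + 1 := by omega
      have h4 : lam (M - (k : ℕ)) t ≤ lam (M - ((k : ℕ) + 1)) t := by
        rw [e3]; exact (hmono _ (by omega) (by omega) t ht).1
      have : Anat S lam mu M ((k:ℕ)+1) t - lam M t - (Anat S lam mu M (k:ℕ) t - lam M t)
          = lam (M - ((k : ℕ) + 1)) t - lam (M - (k : ℕ)) t := by rw [e1, e2]; ring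
      rw [this]; linarith
    · rw [dif_neg hk0, sub_zero, DB_apply]
      have hk00 : (k : ℕ) = 0 := by omega
      rw [mul_comm]
      apply mul_nonneg (inv_nonneg.mpr hdk.le)
      apply mul_nonneg hdi.le
      apply Finset.sum_nonneg
      intro M hM
      simp only [Finset.mem_Icc] at hM
      have e1 : Anat S lam mu M ((k : ℕ) + 1) t = lam (M - 1) t := by
        unfold Anat; rw [if_pos (by omega)]; rw [hk00]
      have e3 : M = (M - 1) + 1 := by omega
      have h4 : lam M t ≤ lam (M - 1) t := by
        conv_lhs => rw [e3]
        exact (hmono _ (by omega) (by omega) t ht).1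
      rw [e1]; linarith
  case inl =>
    -- i < k
    have hk0 : 1 ≤ (k : ℕ) := by omega
    rw [dif_pos hk0, DB_apply, DB_apply]
    have hcoe : ((⟨(k : ℕ) - 1, by omega⟩ : Fin S) : ℕ) + 1 = (k : ℕ) := by simp; omega
    rw [hcoe, ← sub_mul, ← mul_sub, ← Finset.sum_sub_distrib]
    apply mul_nonneg (mul_nonneg hdi.le _) (inv_nonneg.mpr hdk.le)
    have hsum : ∀ M ∈ Finset.Icc ((i:ℕ)+1) S,
        Anat S lam mu M ((k:ℕ)+1) t - lam M t - (Anat S lam mu M (k:ℕ) t - lam M t)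
          = Anat S lam mu M ((k:ℕ)+1) t - Anat S lam mu M (k:ℕ) t := by
      intro M _; ring
    rw [Finset.sum_congr rfl hsum, Finset.sum_sub_distrib,
      Fclosed S lam mu t ((i:ℕ)+1) ((k:ℕ)+1) (by omega) (by omega) (by omega),
      Fclosed S lam mu t ((i:ℕ)+1) ((k:ℕ)) (by omega) (by omega) (by omega)]
    set a := (k : ℕ) + 1 - ((i : ℕ) + 1) with ha
    have ha1 : 1 ≤ a := by omega
    have e5 : (k : ℕ) - ((i : ℕ) + 1) + 1 = a := by omega
    rw [e5]
    -- -∑_{Icc (a+1) (k+1)} mu + ∑_{Icc a k} mu = mu a - mu (k+1) ≥ 0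
    have e6 : ∑ r ∈ Finset.Icc a ((k : ℕ)), mu r t
        = mu a t + ∑ r ∈ Finset.Icc (a + 1) ((k : ℕ)), mu r t := by
      have : Finset.Icc a ((k : ℕ)) = insert a (Finset.Icc (a + 1) ((k : ℕ))) := by
        ext x; simp only [Finset.mem_Icc, Finset.mem_insert]; omega
      rw [this, Finset.sum_insert (by simp only [Finset.mem_Icc]; omega)]
    have e7 : ∑ r ∈ Finset.Icc (a + 1) ((k : ℕ) + 1), mu r t
        = mu ((k : ℕ) + 1) t + ∑ r ∈ Finset.Icc (a + 1) ((k : ℕ)), mu r t := by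
      have : Finset.Icc (a + 1) ((k : ℕ) + 1) = insert ((k:ℕ)+1) (Finset.Icc (a + 1) ((k : ℕ))) := by
        ext x; simp only [Finset.mem_Icc, Finset.mem_insert]; omega
      rw [this, Finset.sum_insert (by simp only [Finset.mem_Icc]; omega)]
    have h8 : mu ((k : ℕ) + 1) t ≤ mu a t := hmu_anti a ((k:ℕ)+1) ha1 (by omega) (by omega)
    rw [e6, e7]
    linarith

lemma pos_preserved {n : ℕ} (C : ℝ → Matrix (Fin n) (Fin n) ℝ) (w : ℝ → Fin n → ℝ)
    (hderiv : ∀ τ ∈ Ici (0:ℝ), ∀ i, HasDerivWithinAt (fun s => w s i)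
      ((C τ).mulVec (w τ) i) (Ici 0) τ)
    (hmetz : ∀ τ ∈ Ici (0:ℝ), ∀ i j, i ≠ j → 0 ≤ C τ i j)
    (hcont : ∀ i j, ContinuousOn (fun τ => C τ i j) (Ici 0))
    (hinit : ∀ i, 0 ≤ w 0 i) :
    ∀ T ∈ Ici (0:ℝ), ∀ i, 0 ≤ w T i := by
  intro T hT i0
  have hT0 : (0:ℝ) ≤ T := hT
  have hwc : ∀ i, ContinuousOn (fun s => w s i) (Ici 0) :=
    fun i τ hτ => (hderiv τ hτ i).continuousWithinAt
  -- bound on row sums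
  set ρ : ℝ → ℝ := fun τ => ∑ i, ∑ j, |C τ i j| with hρ
  have hρc : ContinuousOn ρ (Icc 0 T) := by
    apply ContinuousOn.mono _ (Icc_subset_Ici_self)
    apply continuousOn_finset_sum
    intro i _
    apply continuousOn_finset_sum
    intro j _
    exact (hcont i j).abs
  obtain ⟨M₀, hM₀⟩ := (isCompact_Icc).exists_bound_of_continuousOn hρc
  set M := M₀ + 1 with hM
  have hrow : ∀ τ ∈ Icc (0:ℝ) T, ∀ i, ∑ j, C τ i j < M := by
    intro τ hτ i
    have h1 : ∑ j, C τ i j ≤ ∑ j, |C τ i j| :=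
      Finset.sum_le_sum fun j _ => le_abs_self _
    have h2 : ∑ j, |C τ i j| ≤ ρ τ := by
      rw [hρ]
      exact Finset.single_le_sum (f := fun i => ∑ j, |C τ i j|)
        (fun i _ => Finset.sum_nonneg fun j _ => abs_nonneg _) (Finset.mem_univ i)
    have h3 : ρ τ ≤ M₀ := le_trans (le_abs_self _) (hM₀ τ hτ)
    rw [hM]; linarith
  -- perturbed positivity
  have key : ∀ ε > (0:ℝ), ∀ τ ∈ Icc (0:ℝ) T, ∀ i, 0 < w τ i + ε * Real.exp (M * τ) := by
    intro ε hε
    by_contra hcon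
    push_neg at hcon
    obtain ⟨τ₁, hτ₁, i₁, hi₁⟩ := hcon
    set u : Fin n → ℝ → ℝ := fun i s => w s i + ε * Real.exp (M * s) with hu
    have hucont : ∀ i, ContinuousOn (u i) (Ici 0) := by
      intro i
      exact (hwc i).add (((Real.continuous_exp.comp (continuous_const.mul continuous_id)).continuousOn).const_smul ε)
    set Sbad : Set ℝ := ⋃ i, {τ ∈ Icc (0:ℝ) T | u i τ ≤ 0} with hSbad
    have hSsub : Sbad ⊆ Icc 0 T := by
      intro x hx; simp only [hSbad, mem_iUnion, mem_setOf_eq] at hx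
      obtain ⟨i, hx1, _⟩ := hx; exact hx1
    have hSclosed : IsClosed Sbad := by
      apply isClosed_iUnion_of_finite
      intro i
      have : {τ ∈ Icc (0:ℝ) T | u i τ ≤ 0} = Icc 0 T ∩ (u i) ⁻¹' (Iic 0) := by
        ext x; simp [mem_setOf_eq]
      rw [this]
      exact ContinuousOn.preimage_isClosed_of_isClosed
        ((hucont i).mono Icc_subset_Ici_self) isClosed_Icc isClosed_Iic
    have hSne : Sbad.Nonempty := ⟨τ₁, by simp only [hSbad, mem_iUnion, mem_setOf_eq]; exact ⟨i₁, hτ₁, hi₁⟩⟩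
    have hSbdd : BddBelow Sbad := ⟨0, fun x hx => (hSsub hx).1⟩
    set t₀ := sInf Sbad with ht₀
    have ht₀mem : t₀ ∈ Sbad := hSclosed.csInf_mem hSne hSbdd
    have ht₀Icc : t₀ ∈ Icc (0:ℝ) T := hSsub ht₀mem
    obtain ⟨i, ht₀i⟩ : ∃ i, u i t₀ ≤ 0 := by
      simp only [hSbad, mem_iUnion, mem_setOf_eq] at ht₀mem
      obtain ⟨i, _, h⟩ := ht₀mem; exact ⟨i, h⟩
    have ht₀pos : 0 < t₀ := by
      rcases lt_or_eq_of_le ht₀Icc.1 with h | h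
      · exact h
      · exfalso
        have : u i 0 = w 0 i + ε * Real.exp 0 := by rw [hu]; norm_num
        rw [← h] at ht₀i
        rw [this] at ht₀i
        have := hinit i
        rw [Real.exp_zero] at ht₀i
        linarith
    have hmin : ∀ τ ∈ Ico (0:ℝ) t₀, ∀ j, 0 < u j τ := by
      intro τ hτ j
      by_contra hc
      push_neg at hc
      have hmem : τ ∈ Sbad := by
        simp only [hSbad, mem_iUnion, mem_setOf_eq]
        exact ⟨j, ⟨hτ.1, le_trans hτ.2.le ht₀Icc.2⟩, hc⟩
      have := csInf_le hSbdd hmem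
      exact absurd this (not_le.mpr (by rw [← ht₀]; exact hτ.2)).elim
    -- left limit nonneg
    have hclos : t₀ ∈ closure (Ico (0:ℝ) t₀) := by
      rw [closure_Ico (ne_of_lt ht₀pos)]
      exact ⟨ht₀pos.le, le_refl _⟩
    have hnebot : (𝓝[Ico (0:ℝ) t₀] t₀).NeBot := mem_closure_iff_nhdsWithin_neBot.mp hclos
    have hnonneg : ∀ j, 0 ≤ u j t₀ := by
      intro j
      have htend : Tendsto (u j) (𝓝[Ico (0:ℝ) t₀] t₀) (𝓝 (u j t₀)) := by
        apply ((hucont j) t₀ ht₀pos.le).mono_left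
        apply nhdsWithin_mono
        intro x hx; exact hx.1
      exact ge_of_tendsto htend (eventually_nhdsWithin_of_forall
        (fun τ hτ => (hmin τ hτ j).le))
    have hui0 : u i t₀ = 0 := le_antisymm ht₀i (hnonneg i)
    -- derivative of u i at t₀
    set L := (C t₀).mulVec (w t₀) i + ε * (Real.exp (M * t₀) * M) with hL
    have hderivu : HasDerivWithinAt (u i) L (Ici 0) t₀ := by
      apply (hderiv t₀ ht₀pos.le i).add
      have h1 : HasDerivAt (fun s : ℝ => M * s) M t₀ := by
        simpa using (hasDerivAt_id t₀).const_mul M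
      exact ((h1.exp).const_mul ε).hasDerivWithinAt
    -- L > 0
    have hLpos : 0 < L := by
      have hexp : 0 < Real.exp (M * t₀) := Real.exp_pos _
      have hmv : (C t₀).mulVec (w t₀) i
          = (∑ j, C t₀ i j * u j t₀) - ε * Real.exp (M * t₀) * ∑ j, C t₀ i j := by
        simp only [Matrix.mulVec, dotProduct]
        rw [Finset.mul_sum, ← Finset.sum_sub_distrib]
        apply Finset.sum_congr rfl
        intro j _
        simp only [hu]
        ring
      have hsum1 : 0 ≤ ∑ j, C t₀ i j * u j t₀ := by
        apply Finset.sum_nonneg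
        intro j _
        by_cases hji : j = i
        · subst hji; rw [hui0, mul_zero]
        · exact mul_nonneg (hmetz t₀ ht₀pos.le i j (Ne.symm hji)) (hnonneg j)
      have hrow' := hrow t₀ ht₀Icc i
      have h9 : ε * Real.exp (M * t₀) * (∑ j, C t₀ i j) < ε * Real.exp (M * t₀) * M :=
        mul_lt_mul_of_pos_left hrow' (mul_pos hε hexp)
      have h10 : ε * (Real.exp (M * t₀) * M) = ε * Real.exp (M * t₀) * M := by ring
      rw [hL, hmv]
      linarith
    -- L ≤ 0 from slope
    have hLle : L ≤ 0 := by
      have hslope := hasDerivWithinAt_iff_tendsto_slope.mp hderivu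
      have hle : 𝓝[Ico (0:ℝ) t₀] t₀ ≤ 𝓝[Ici (0:ℝ) \ {t₀}] t₀ := by
        apply nhdsWithin_mono
        intro x hx
        exact ⟨hx.1, by intro hc; rw [mem_singleton_iff] at hc; exact absurd hx.2 (by rw [hc]; exact lt_irrefl _)⟩
      apply le_of_tendsto (hslope.mono_left hle)
      apply eventually_nhdsWithin_of_forall
      intro τ hτ
      have h1 : 0 < u i τ := hmin τ hτ i
      have h2 : τ - t₀ < 0 := by linarith [hτ.2]
      rw [slope_def_field, hui0, sub_zero]
      exact div_nonpos_iff.mpr (Or.inl ⟨h1.le, h2.le⟩)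
    linarith
  -- conclude
  by_contra hneg
  push_neg at hneg
  set ε := (-w T i0) / Real.exp (M * T) with hε
  have hεpos : 0 < ε := div_pos (by linarith) (Real.exp_pos _)
  have := key ε hεpos T ⟨hT0, le_refl T⟩ i0
  rw [hε] at this
  rw [div_mul_cancel₀] at this
  · linarith
  · exact ne_of_gt (Real.exp_pos _)

lemma szkB_cont (S : ℕ) (lam mu : ℕ → ℝ → ℝ)
    (hlamc : ∀ k, 1 ≤ k → k ≤ S → ContinuousOn (lam k) (Ici 0))
    (hmuc : ∀ k, 1 ≤ k → k ≤ S → ContinuousOn (mu k) (Ici 0))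
    (i j : Fin S) : ContinuousOn (fun t => szkB S lam mu t i j) (Ici 0) := by
  unfold szkB
  apply ContinuousOn.sub _ (hlamc _ (by omega) (by omega))
  rcases lt_trichotomy ((j : ℕ)) ((i : ℕ)) with h | h | h
  · simp only [if_pos h]
    exact hlamc _ (by omega) (by omega)
  · simp only [if_neg (by omega : ¬ (j:ℕ) < (i:ℕ)), if_neg (by omega : ¬ (i:ℕ) < (j:ℕ))]
    apply ContinuousOn.neg
    apply ContinuousOn.add
    · apply continuousOn_finset_sum
      intro k hk
      simp only [Finset.mem_Icc] at hk
      exact hmuc _ (by omega) (by omega)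
    · apply continuousOn_finset_sum
      intro k hk
      simp only [Finset.mem_Icc] at hk
      exact hlamc _ (by omega) (by omega)
  · simp only [if_neg (by omega : ¬ (j:ℕ) < (i:ℕ)), if_pos h]
    exact hmuc _ (by omega) (by omega)

lemma C_cont (S : ℕ) (lam mu : ℕ → ℝ → ℝ) (d : ℕ → ℝ)
    (hlamc : ∀ k, 1 ≤ k → k ≤ S → ContinuousOn (lam k) (Ici 0))
    (hmuc : ∀ k, 1 ≤ k → k ≤ S → ContinuousOn (mu k) (Ici 0))
    (i j : Fin S) :
    ContinuousOn (fun t => (triD S d * szkB S lam mu t * triE S d) i j) (Ici 0) := by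
  have heq : (fun t => (triD S d * szkB S lam mu t * triE S d) i j)
      = fun t => ∑ l, (∑ m, triD S d i m * szkB S lam mu t m l) * triE S d l j := by
    funext t; simp only [Matrix.mul_apply]
  rw [heq]
  apply continuousOn_finset_sum
  intro l _
  apply ContinuousOn.mul _ continuousOn_const
  apply continuousOn_finset_sum
  intro m _
  exact continuousOn_const.mul (szkB_cont S lam mu hlamc hmuc m l)

lemma contOn_sup' {ι : Type*} (s : Finset ι) (hs : s.Nonempty) (F : ι → ℝ → ℝ) (A : Set ℝ)
    (h : ∀ i ∈ s, ContinuousOn (F i) A) :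
    ContinuousOn (fun t => s.sup' hs (fun i => F i t)) A := by
  induction hs using Finset.Nonempty.cons_induction with
  | singleton a =>
    have : (fun t => ({a} : Finset ι).sup' (by simp) (fun i => F i t)) = F a := by
      funext t; simp
    rw [this]; exact h a (by simp)
  | cons a s ha hne ih =>
    have : (fun t => (Finset.cons a s ha).sup' (by simp) (fun i => F i t))
        = fun t => (F a t) ⊔ (s.sup' hne (fun i => F i t)) := by
      funext t; rw [Finset.sup'_cons hne]
    rw [this]
    exact ContinuousOn.sup (h a (by simp)) (ih fun i hi => h i (Finset.mem_cons_of_mem hi))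
/-- Theorem 3 (lower bound) for the SZK model with nonincreasing arrival and
service rates, under nonnegative initial difference `D(z*(0) − z**(0)) ≥ 0`. -/
theorem szk_lower_bound
    (S : ℕ) (hS : 1 ≤ S)
    (lam mu : ℕ → ℝ → ℝ) (d : ℕ → ℝ)
    (hlam : ∀ k, 1 ≤ k → k ≤ S →
      ContinuousOn (lam k) (Ici 0) ∧ ∀ t ∈ Ici (0 : ℝ), 0 ≤ lam k t)
    (hmu : ∀ k, 1 ≤ k → k ≤ S →
      ContinuousOn (mu k) (Ici 0) ∧ ∀ t ∈ Ici (0 : ℝ), 0 ≤ mu k t)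
    (hmono : ∀ k, 1 ≤ k → k ≤ S - 1 → ∀ t ∈ Ici (0 : ℝ),
      lam (k + 1) t ≤ lam k t ∧ mu (k + 1) t ≤ mu k t)
    (hd : ∀ k, 1 ≤ k → k ≤ S → 0 < d k)
    (alpha : Fin S → ℝ → ℝ)
    (halpha : ∀ k t, alpha k t = -∑ i, (triD S d * szkB S lam mu t * (triD S d)⁻¹) i k)
    (blow : ℝ → ℝ) (hblow : ∀ t, blow t = ⨆ k, alpha k t)
    (f : ℝ → Fin S → ℝ) (hf : ∀ t, ∀ i : Fin S, f t i = lam ((i : ℕ) + 1) t)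
    (z₁ z₂ : ℝ → Fin S → ℝ)
    (hz₁ : ∀ t ∈ Ici (0 : ℝ), ∀ i, HasDerivWithinAt (fun s => z₁ s i)
      ((szkB S lam mu t).mulVec (z₁ t) i + f t i) (Ici 0) t)
    (hz₂ : ∀ t ∈ Ici (0 : ℝ), ∀ i, HasDerivWithinAt (fun s => z₂ s i)
      ((szkB S lam mu t).mulVec (z₂ t) i + f t i) (Ici 0) t)
    (hinit : ∀ i, 0 ≤ (triD S d).mulVec (z₁ 0 - z₂ 0) i) :
    ∀ t ∈ Ici (0 : ℝ),
      Real.exp (-∫ τ in (0 : ℝ)..t, blow τ) *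
          ∑ i, |(triD S d).mulVec (z₁ 0 - z₂ 0) i| ≤
        ∑ i, |(triD S d).mulVec (z₁ t - z₂ t) i| := by
  haveI : Nonempty (Fin S) := ⟨⟨0, by omega⟩⟩
  have hDinv : (triD S d)⁻¹ = triE S d := triD_inv S d hd
  set Ct : ℝ → Matrix (Fin S) (Fin S) ℝ :=
    fun τ => triD S d * szkB S lam mu τ * triE S d with hCt
  set w : ℝ → Fin S → ℝ := fun τ => (triD S d).mulVec (z₁ τ - z₂ τ) with hw
  have hwt : ∀ τ, (triD S d).mulVec (z₁ τ - z₂ τ) = w τ := fun τ => rfl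
  -- derivative of w
  have hwderiv : ∀ τ ∈ Ici (0:ℝ), ∀ i, HasDerivWithinAt (fun s => w s i)
      ((Ct τ).mulVec (w τ) i) (Ici 0) τ := by
    intro τ hτ i
    have h1 : ∀ j, HasDerivWithinAt (fun s => z₁ s j - z₂ s j)
        ((szkB S lam mu τ).mulVec (z₁ τ - z₂ τ) j) (Ici 0) τ := by
      intro j
      have h := (hz₁ τ hτ j).sub (hz₂ τ hτ j)
      have he : (szkB S lam mu τ).mulVec (z₁ τ) j + f τ j
            - ((szkB S lam mu τ).mulVec (z₂ τ) j + f τ j)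
          = (szkB S lam mu τ).mulVec (z₁ τ - z₂ τ) j := by
        rw [Matrix.mulVec_sub]
        simp only [Pi.sub_apply]
        ring
      rwa [he] at h
    have h2 : (fun s => w s i) = fun s => ∑ j, triD S d i j * (z₁ s j - z₂ s j) := by
      funext s
      simp only [hw, Matrix.mulVec, dotProduct, Pi.sub_apply]
    have h3 : HasDerivWithinAt (fun s => ∑ j, triD S d i j * (z₁ s j - z₂ s j))
        (∑ j, triD S d i j * (szkB S lam mu τ).mulVec (z₁ τ - z₂ τ) j) (Ici 0) τ :=
      HasDerivWithinAt.fun_sum (fun j _ => (h1 j).const_mul _)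
    rw [h2]
    convert h3 using 1
    have h4 : Ct τ * triD S d = triD S d * szkB S lam mu τ := by
      rw [hCt, Matrix.mul_assoc (triD S d * szkB S lam mu τ) (triE S d) (triD S d),
        triE_mul_triD S d hd, Matrix.mul_one]
    calc (Ct τ).mulVec (w τ) i
        = ((Ct τ * triD S d).mulVec (z₁ τ - z₂ τ)) i := by
          rw [hw, Matrix.mulVec_mulVec]
      _ = ((triD S d * szkB S lam mu τ).mulVec (z₁ τ - z₂ τ)) i := by rw [h4]
      _ = ((triD S d).mulVec ((szkB S lam mu τ).mulVec (z₁ τ - z₂ τ))) i := by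
          rw [Matrix.mulVec_mulVec]
      _ = ∑ j, triD S d i j * (szkB S lam mu τ).mulVec (z₁ τ - z₂ τ) j := by
          simp only [Matrix.mulVec, dotProduct]
  -- positivity
  have hmetz := C_offdiag_nonneg S hS lam mu d hmono hd
  have hcont : ∀ i j, ContinuousOn (fun τ => Ct τ i j) (Ici 0) :=
    fun i j => C_cont S lam mu d (fun k h1 h2 => (hlam k h1 h2).1)
      (fun k h1 h2 => (hmu k h1 h2).1) i j
  have hinitw : ∀ i, 0 ≤ w 0 i := hinit
  have hwpos : ∀ τ ∈ Ici (0:ℝ), ∀ i, 0 ≤ w τ i :=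
    pos_preserved Ct w hwderiv hmetz hcont hinitw
  -- alpha and blow
  have halpha' : ∀ k t, alpha k t = -∑ i, Ct t i k := by
    intro k t; rw [halpha k t, hDinv]
  have halphacont : ∀ k : Fin S, ContinuousOn (alpha k) (Ici 0) := by
    intro k
    have : alpha k = fun t => -∑ i, Ct t i k := funext (halpha' k)
    rw [this]
    exact (continuousOn_finset_sum _ (fun i _ => hcont i k)).neg
  have hblowc : ContinuousOn blow (Ici 0) := by
    have : blow = fun t => Finset.univ.sup' Finset.univ_nonempty (fun k => alpha k t) := by
      funext t; rw [hblow t, Finset.sup'_univ_eq_ciSup]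
    rw [this]
    exact contOn_sup' _ _ (fun k => alpha k) _ (fun k _ => halphacont k)
  have halpha_le : ∀ (k : Fin S) (t : ℝ), alpha k t ≤ blow t := by
    intro k t; rw [hblow t]
    exact le_ciSup (f := fun k : Fin S => alpha k t) (Set.Finite.bddAbove (Set.finite_range _)) k
  set blowp : ℝ → ℝ := fun τ => blow (max τ 0) with hblowp
  have hblowpc : Continuous blowp :=
    hblowc.comp_continuous (continuous_id.max continuous_const) (fun x => le_max_right x 0)
  have hblowp_eq : ∀ τ ∈ Ici (0:ℝ), blowp τ = blow τ := by
    intro τ hτ; rw [hblowp]; simp only; rw [max_eq_left hτ]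
  set G : ℝ → ℝ := fun x => ∫ τ in (0:ℝ)..x, blowp τ with hG
  have hGderiv : ∀ x, HasDerivAt G (blowp x) x :=
    fun x => (hblowpc.integral_hasStrictDerivAt 0 x).hasDerivAt
  set g : ℝ → ℝ := fun τ => ∑ i, w τ i with hg
  have hgderiv : ∀ τ ∈ Ici (0:ℝ), HasDerivWithinAt g
      (∑ i, (Ct τ).mulVec (w τ) i) (Ici 0) τ :=
    fun τ hτ => HasDerivWithinAt.fun_sum (fun i _ => hwderiv τ hτ i)
  set ψ : ℝ → ℝ := fun τ => Real.exp (G τ) * g τ with hψ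
  have hψd : ∀ τ ∈ Ici (0:ℝ), HasDerivWithinAt ψ
      (Real.exp (G τ) * blowp τ * g τ + Real.exp (G τ) * ∑ i, (Ct τ).mulVec (w τ) i)
      (Ici 0) τ :=
    fun τ hτ => (((hGderiv τ).exp).hasDerivWithinAt).mul (hgderiv τ hτ)
  have hψ0 : ∀ τ ∈ Ici (0:ℝ),
      0 ≤ Real.exp (G τ) * blowp τ * g τ + Real.exp (G τ) * ∑ i, (Ct τ).mulVec (w τ) i := by
    intro τ hτ
    have hsum : ∑ i, (Ct τ).mulVec (w τ) i = ∑ k, (∑ i, Ct τ i k) * w τ k := by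
      simp only [Matrix.mulVec, dotProduct]
      rw [Finset.sum_comm]
      simp only [Finset.sum_mul]
    have hterm : ∀ k : Fin S, -blow τ * w τ k ≤ (∑ i, Ct τ i k) * w τ k := by
      intro k
      have h1 : (∑ i, Ct τ i k) = -alpha k τ := by rw [halpha' k τ]; ring
      rw [h1]
      exact mul_le_mul_of_nonneg_right (neg_le_neg (halpha_le k τ)) (hwpos τ hτ k)
    have h2 : -blow τ * g τ ≤ ∑ i, (Ct τ).mulVec (w τ) i := by
      rw [hsum, hg]
      simp only
      rw [Finset.mul_sum]
      exact Finset.sum_le_sum (fun k _ => hterm k)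
    have h3 : Real.exp (G τ) * blowp τ * g τ + Real.exp (G τ) * ∑ i, (Ct τ).mulVec (w τ) i
        = Real.exp (G τ) * (blow τ * g τ + ∑ i, (Ct τ).mulVec (w τ) i) := by
      rw [hblowp_eq τ hτ]; ring
    rw [h3]
    apply mul_nonneg (Real.exp_nonneg _)
    linarith
  have hψmono : MonotoneOn ψ (Ici 0) := by
    apply monotoneOn_of_deriv_nonneg (convex_Ici 0)
    · intro τ hτ; exact (hψd τ hτ).continuousWithinAt
    · intro τ hτ
      rw [interior_Ici] at hτ
      exact ((hψd τ (mem_Ici.mpr (le_of_lt (mem_Ioi.mp hτ)))).differentiableWithinAt).mono interior_subset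
    · intro τ hτ
      rw [interior_Ici] at hτ
      have hh := (hψd τ (mem_Ici.mpr (le_of_lt (mem_Ioi.mp hτ)))).hasDerivAt (Ici_mem_nhds hτ)
      rw [hh.deriv]
      exact hψ0 τ (mem_Ici.mpr (le_of_lt (mem_Ioi.mp hτ)))
  -- conclude
  intro t ht
  have hψ0eq : ψ 0 = g 0 := by
    rw [hψ, hG]; simp [intervalIntegral.integral_same]
  have h1 : g 0 ≤ Real.exp (G t) * g t := by
    have := hψmono (self_mem_Ici (a := (0:ℝ))) ht ht
    rwa [hψ0eq] at this
  have hInt : (∫ τ in (0:ℝ)..t, blow τ) = G t := by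
    rw [hG]
    apply intervalIntegral.integral_congr
    intro τ hτ
    rw [uIcc_of_le ht] at hτ
    exact (hblowp_eq τ hτ.1).symm
  have hw0abs : ∀ i, |(triD S d).mulVec (z₁ 0 - z₂ 0) i| = w 0 i :=
    fun i => abs_of_nonneg (hinit i)
  have hg0 : ∑ i, |(triD S d).mulVec (z₁ 0 - z₂ 0) i| = g 0 := by
    rw [hg]; exact Finset.sum_congr rfl (fun i _ => hw0abs i)
  have hL : Real.exp (-(G t)) * g 0 ≤ g t := by
    have h2 := mul_le_mul_of_nonneg_left h1 (Real.exp_nonneg (-(G t)))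
    calc Real.exp (-(G t)) * g 0 ≤ Real.exp (-(G t)) * (Real.exp (G t) * g t) := h2
      _ = g t := by rw [← mul_assoc, ← Real.exp_add, neg_add_cancel, Real.exp_zero, one_mul]
  have hend : g t ≤ ∑ i, |(triD S d).mulVec (z₁ t - z₂ t) i| := by
    rw [hg]
    apply Finset.sum_le_sum
    intro i _
    rw [hwt t]
    exact le_abs_self _
  rw [hInt, hg0]
  exact le_trans hL hend
end

section
/- (Example 2: sharp rate for batch arrivals and group services.) In the SZK setting with λ_k(t) = λ(t)/k and μ_k(t) = μ(t)/k for 1 ≤ k ≤ S, where λ, μ : [0,∞) → [0,∞) are continuous, take d_1 = ⋯ = d_S = 1 (so D_{kj} = 1 for j ≥ k, 0 otherwise). Then for any two differentiable functions z*, z** : [0,∞) → ℝ^S satisfying z'(t) = B(t)z(t) + f(t) for all t ≥ 0, where f(t)_i = λ(t)/i, one has ‖D(z*(t) − z**(t))‖₁ ≤ exp(−∫₀ᵗ (λ(τ) + μ(τ)) dτ) · ‖D(z*(0) − z**(0))‖₁ for all t ≥ 0, and if in addition D(z*(0) − z**(0)) ≥ 0 componentwise, then equality holds: ‖D(z*(t)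 − z**(t))‖₁ = exp(−∫₀ᵗ (λ(τ) + μ(τ)) dτ) · ‖D(z*(0) − z**(0))‖₁ for all t ≥ 0. -/
open Set

namespace SZKaux

noncomputable def Hh (n : ℕ) : ℝ := ∑ m ∈ Finset.range n, (1:ℝ)/(m+1)

lemma Hh_succ (n : ℕ) : Hh (n+1) = Hh n + 1/((n:ℝ)+1) := Finset.sum_range_succ _ n

lemma sum_Ico_inv (a b : ℕ) (h : a ≤ b) :
    ∑ k ∈ Finset.Ico a b, (1:ℝ)/((k:ℝ)+1) = Hh b - Hh a := by
  rw [Hh, Hh, Finset.sum_Ico_eq_sub _ h]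

lemma sum_Ico_shift (f : ℕ → ℝ) (c a b : ℕ) (hc : c ≤ a) :
    ∑ k ∈ Finset.Ico a b, f (k - c) = ∑ k ∈ Finset.Ico (a - c) (b - c), f k := by
  rw [Finset.sum_Ico_eq_sum_range, Finset.sum_Ico_eq_sum_range]
  have h : b - c - (a - c) = b - a := by omega
  rw [h]
  exact Finset.sum_congr rfl fun m _ => by congr 1; omega

lemma sum_inv_sub_right (j a b : ℕ) (hj : j < a) (hab : a ≤ b) :
    ∑ k ∈ Finset.Ico a b, (1:ℝ)/(((k - j : ℕ) : ℝ)) = Hh (b - (j+1)) - Hh (a - (j+1)) := by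
  have : ∑ k ∈ Finset.Ico a b, (1:ℝ)/(((k - j : ℕ) : ℝ))
      = ∑ k ∈ Finset.Ico a b, (fun m : ℕ => (1:ℝ)/((m:ℝ)+1)) (k - (j+1)) := by
    refine Finset.sum_congr rfl fun k hk => ?_
    simp only [Finset.mem_Ico] at hk
    have h1 : (k - j : ℕ) = (k - (j+1)) + 1 := by omega
    rw [h1]; push_cast; ring_nf
  rw [this]
  rw [sum_Ico_shift (fun m : ℕ => (1:ℝ)/((m:ℝ)+1)) (j+1) a b (by omega)]
  exact sum_Ico_inv _ _ (by omega)

lemma sum_inv_sub_left (a b i : ℕ) (hab : a ≤ b) (hb : b ≤ i) :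
    ∑ k ∈ Finset.Ico a b, (1:ℝ)/(((i - k : ℕ) : ℝ)) = Hh (i - a) - Hh (i - b) := by
  rw [Finset.sum_Ico_eq_sum_range]
  rw [← Finset.sum_range_reflect]
  have h : ∀ m ∈ Finset.range (b - a),
      (1:ℝ)/(((i - (a + (b - a - 1 - m)) : ℕ) : ℝ)) = (fun x : ℕ => (1:ℝ)/((x:ℝ)+1)) ((i - b) + m) := by
    intro m hm
    simp only [Finset.mem_range] at hm
    have : (i - (a + (b - a - 1 - m)) : ℕ) = ((i - b) + m) + 1 := by omega
    rw [this]; push_cast; ring_nf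
  rw [Finset.sum_congr rfl h]
  have : ∑ m ∈ Finset.range (b - a), (fun x : ℕ => (1:ℝ)/((x:ℝ)+1)) ((i - b) + m)
      = ∑ k ∈ Finset.Ico (i - b) (i - b + (b - a)), (1:ℝ)/((k:ℝ)+1) := by
    rw [Finset.sum_Ico_eq_sum_range]
    simp
  rw [this, sum_Ico_inv _ _ (by omega)]
  congr 2
  omega

end SZKaux

namespace SZKaux

noncomputable def ClF (S : ℕ) : ℕ → ℕ → ℝ := fun i j =>
  if j < i then 1/(((i-j:ℕ)):ℝ) - 1/(((S-j:ℕ)):ℝ) else if i = j then -(Hh (S-i)) else 0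

noncomputable def CmF : ℕ → ℕ → ℝ := fun i j =>
  if i < j then 1/(((j-i:ℕ)):ℝ) - 1/((j:ℝ)+1) else if i = j then -(Hh (i+1)) else 0

noncomputable def BlF (S : ℕ) : ℕ → ℕ → ℝ := fun i j =>
  (if j < i then 1/(((i-j:ℕ)):ℝ) else if i < j then 0 else -(Hh (S-(i+1)))) - 1/((i:ℝ)+1)

noncomputable def BmF : ℕ → ℕ → ℝ := fun i j =>
  if j < i then 0 else if i < j then 1/(((j-i:ℕ)):ℝ) else -(Hh (i+1))

lemma sum_inv_succ (a b : ℕ) (h : a ≤ b) :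
    ∑ k ∈ Finset.Ico a b, (1:ℝ)/((k:ℝ)+1) = Hh b - Hh a := sum_Ico_inv a b h

lemma keyBl (S i j : ℕ) (hi : i < S) (hj : j < S) :
    ∑ k ∈ Finset.Ico i S, BlF S k j = ∑ k ∈ Finset.Ico 0 (j+1), ClF S i k := by
  have hsplit : ∑ k ∈ Finset.Ico i S, BlF S k j
      = (∑ k ∈ Finset.Ico i S, (if j < k then 1/(((k-j:ℕ)):ℝ) else if k < j then 0
          else -(Hh (S-(k+1))))) - ∑ k ∈ Finset.Ico i S, (1:ℝ)/((k:ℝ)+1) := by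
    rw [← Finset.sum_sub_distrib]; rfl
  rw [hsplit, sum_inv_succ i S (le_of_lt hi)]
  rcases le_or_gt i j with hij | hij
  · -- case i ≤ j
    have h1 : ∑ k ∈ Finset.Ico i S, (if j < k then 1/(((k-j:ℕ)):ℝ) else if k < j then 0
          else -(Hh (S-(k+1)))) = 0 := by
      rw [← Finset.sum_Ico_consecutive _ (show i ≤ j+1 by omega) (show j+1 ≤ S by omega)]
      have h2 : ∑ k ∈ Finset.Ico i (j+1), (if j < k then 1/(((k-j:ℕ)):ℝ) else if k < j then 0
          else -(Hh (S-(k+1)))) = -(Hh (S-(j+1))) := by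
        rw [Finset.sum_Ico_succ_top hij]
        have : ∑ k ∈ Finset.Ico i j, (if j < k then 1/(((k-j:ℕ)):ℝ) else if k < j then 0
            else -(Hh (S-(k+1)))) = 0 := by
          apply Finset.sum_eq_zero; intro k hk; simp only [Finset.mem_Ico] at hk
          rw [if_neg (by omega), if_pos (by omega)]
        rw [this]; rw [if_neg (by omega), if_neg (by omega)]; ring
      have h3 : ∑ k ∈ Finset.Ico (j+1) S, (if j < k then 1/(((k-j:ℕ)):ℝ) else if k < j then 0
          else -(Hh (S-(k+1)))) = Hh (S-(j+1)) := by
        have : ∀ k ∈ Finset.Ico (j+1) S, (if j < k then 1/(((k-j:ℕ)):ℝ) else if k < j then 0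
            else -(Hh (S-(k+1)))) = 1/(((k-j:ℕ)):ℝ) := by
          intro k hk; simp only [Finset.mem_Ico] at hk; rw [if_pos (by omega)]
        rw [Finset.sum_congr rfl this, sum_inv_sub_right j (j+1) S (by omega) (by omega)]
        simp [Hh]
      rw [h2, h3]; ring
    rw [h1]
    -- RHS
    have h4 : ∑ k ∈ Finset.Ico 0 (j+1), ClF S i k
        = (∑ k ∈ Finset.Ico 0 i, (1/(((i-k:ℕ)):ℝ) - 1/(((S-k:ℕ)):ℝ))) + -(Hh (S-i)) := by
      rw [← Finset.sum_Ico_consecutive _ (show (0:ℕ) ≤ i by omega) (show i ≤ j+1 by omega)]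
      congr 1
      · refine Finset.sum_congr rfl fun k hk => ?_
        simp only [Finset.mem_Ico] at hk; rw [ClF, if_pos (by omega)]
      · rw [← Finset.sum_Ico_consecutive _ (show i ≤ i+1 by omega) (show i+1 ≤ j+1 by omega)]
        have e1 : ∑ k ∈ Finset.Ico i (i+1), ClF S i k = -(Hh (S-i)) := by
          rw [Finset.sum_Ico_succ_top (le_refl i), Finset.Ico_self, Finset.sum_empty, ClF]
          rw [if_neg (by omega)]; simp
        have e2 : ∑ k ∈ Finset.Ico (i+1) (j+1), ClF S i k = 0 := by
          apply Finset.sum_eq_zero; intro k hk; simp only [Finset.mem_Ico] at hk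
          rw [ClF, if_neg (by omega), if_neg (by omega)]
        rw [e1, e2]; ring
    rw [h4, Finset.sum_sub_distrib]
    rw [show ∑ k ∈ Finset.Ico 0 i, (1:ℝ)/(((i-k:ℕ)):ℝ) = Hh i - Hh 0 from by
      rcases Nat.eq_zero_or_pos i with h0 | h0
      · subst h0; simp [Hh]
      · rw [sum_inv_sub_left 0 i i (by omega) (by omega)]; simp]
    rw [show ∑ k ∈ Finset.Ico 0 i, (1:ℝ)/(((S-k:ℕ)):ℝ) = Hh S - Hh (S-i) from by
      rcases Nat.eq_zero_or_pos i with h0 | h0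
      · subst h0; simp
      · rw [sum_inv_sub_left 0 i S (by omega) (by omega)]; simp]
    simp [Hh]; ring
  · -- case j < i
    have h1 : ∑ k ∈ Finset.Ico i S, (if j < k then 1/(((k-j:ℕ)):ℝ) else if k < j then 0
          else -(Hh (S-(k+1)))) = Hh (S-(j+1)) - Hh (i-(j+1)) := by
      have : ∀ k ∈ Finset.Ico i S, (if j < k then 1/(((k-j:ℕ)):ℝ) else if k < j then 0
          else -(Hh (S-(k+1)))) = 1/(((k-j:ℕ)):ℝ) := by
        intro k hk; simp only [Finset.mem_Ico] at hk; rw [if_pos (by omega)]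
      rw [Finset.sum_congr rfl this, sum_inv_sub_right j i S (by omega) (by omega)]
    rw [h1]
    have h4 : ∑ k ∈ Finset.Ico 0 (j+1), ClF S i k
        = ∑ k ∈ Finset.Ico 0 (j+1), (1/(((i-k:ℕ)):ℝ) - 1/(((S-k:ℕ)):ℝ)) := by
      refine Finset.sum_congr rfl fun k hk => ?_
      simp only [Finset.mem_Ico] at hk; rw [ClF, if_pos (by omega)]
    rw [h4, Finset.sum_sub_distrib]
    rw [sum_inv_sub_left 0 (j+1) i (by omega) (by omega)]
    rw [sum_inv_sub_left 0 (j+1) S (by omega) (by omega)]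
    simp [Hh]; ring

lemma keyBm (S i j : ℕ) (hi : i < S) (hj : j < S) :
    ∑ k ∈ Finset.Ico i S, BmF k j = ∑ k ∈ Finset.Ico 0 (j+1), CmF i k := by
  rcases lt_or_ge j i with hij | hij
  · -- j < i : both sides zero
    have h1 : ∑ k ∈ Finset.Ico i S, BmF k j = 0 := by
      apply Finset.sum_eq_zero; intro k hk; simp only [Finset.mem_Ico] at hk
      simp only [BmF]; rw [if_pos (by omega)]
    have h2 : ∑ k ∈ Finset.Ico 0 (j+1), CmF i k = 0 := by
      apply Finset.sum_eq_zero; intro k hk; simp only [Finset.mem_Ico] at hk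
      simp only [CmF]; rw [if_neg (by omega), if_neg (by omega)]
    rw [h1, h2]
  · -- i ≤ j
    have h1 : ∑ k ∈ Finset.Ico i S, BmF k j = Hh (j-i) - Hh (j+1) := by
      rw [← Finset.sum_Ico_consecutive _ (show i ≤ j+1 by omega) (show j+1 ≤ S by omega)]
      have e1 : ∑ k ∈ Finset.Ico i (j+1), BmF k j = Hh (j-i) + -(Hh (j+1)) := by
        rw [Finset.sum_Ico_succ_top hij]
        congr 1
        · have : ∀ k ∈ Finset.Ico i j, BmF k j = 1/(((j-k:ℕ)):ℝ) := by
            intro k hk; simp only [Finset.mem_Ico] at hk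
            simp only [BmF]; rw [if_neg (by omega), if_pos (by omega)]
          rw [Finset.sum_congr rfl this]
          rcases eq_or_lt_of_le hij with h0 | h0
          · subst h0; simp [Hh]
          · rw [sum_inv_sub_left i j j (by omega) (by omega)]; simp [Hh]
        · simp only [BmF]; rw [if_neg (by omega), if_neg (by omega)]
      have e2 : ∑ k ∈ Finset.Ico (j+1) S, BmF k j = 0 := by
        apply Finset.sum_eq_zero; intro k hk; simp only [Finset.mem_Ico] at hk
        simp only [BmF]; rw [if_pos (by omega)]
      rw [e1, e2]; ring
    have h2 : ∑ k ∈ Finset.Ico 0 (j+1), CmF i k = Hh (j-i) - Hh (j+1) := by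
      rw [← Finset.sum_Ico_consecutive _ (show (0:ℕ) ≤ i+1 by omega) (show i+1 ≤ j+1 by omega)]
      have e1 : ∑ k ∈ Finset.Ico 0 (i+1), CmF i k = -(Hh (i+1)) := by
        rw [Finset.sum_Ico_succ_top (by omega)]
        have : ∑ k ∈ Finset.Ico 0 i, CmF i k = 0 := by
          apply Finset.sum_eq_zero; intro k hk; simp only [Finset.mem_Ico] at hk
          simp only [CmF]; rw [if_neg (by omega), if_neg (by omega)]
        rw [this]; simp only [CmF]; rw [if_neg (by omega)]; simp
      have e2 : ∑ k ∈ Finset.Ico (i+1) (j+1), CmF i k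
          = (Hh (j-i) - Hh 0) - (Hh (j+1) - Hh (i+1)) := by
        have : ∀ k ∈ Finset.Ico (i+1) (j+1), CmF i k = 1/(((k-i:ℕ)):ℝ) - 1/((k:ℝ)+1) := by
          intro k hk; simp only [Finset.mem_Ico] at hk
          simp only [CmF]; rw [if_pos (by omega)]
        rw [Finset.sum_congr rfl this, Finset.sum_sub_distrib]
        rw [sum_inv_sub_right i (i+1) (j+1) (by omega) (by omega)]
        rw [sum_inv_succ (i+1) (j+1) (by omega)]
        have h5 : (i + 1) - (i + 1) = (0:ℕ) := by omega
        have h6 : (j + 1) - (i + 1) = j - i := by omega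
        rw [h5, h6]
      rw [e1, e2]; simp [Hh]; ring
    rw [h1, h2]

lemma colCl (S j : ℕ) (hj : j < S) : ∑ i ∈ Finset.Ico 0 S, ClF S i j = -1 := by
  rw [← Finset.sum_Ico_consecutive _ (show (0:ℕ) ≤ j+1 by omega) (show j+1 ≤ S by omega)]
  have e1 : ∑ i ∈ Finset.Ico 0 (j+1), ClF S i j = -(Hh (S-j)) := by
    rw [Finset.sum_Ico_succ_top (by omega)]
    have : ∑ i ∈ Finset.Ico 0 j, ClF S i j = 0 := by
      apply Finset.sum_eq_zero; intro i hi; simp only [Finset.mem_Ico] at hi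
      simp only [ClF]; rw [if_neg (by omega), if_neg (by omega)]
    rw [this]; simp only [ClF]; rw [if_neg (by omega)]; simp
  have e2 : ∑ i ∈ Finset.Ico (j+1) S, ClF S i j
      = (Hh (S-(j+1)) - Hh 0) - (S-(j+1) : ℕ) * (1/(((S-j:ℕ)):ℝ)) := by
    have : ∀ i ∈ Finset.Ico (j+1) S, ClF S i j = 1/(((i-j:ℕ)):ℝ) - 1/(((S-j:ℕ)):ℝ) := by
      intro i hi; simp only [Finset.mem_Ico] at hi
      simp only [ClF]; rw [if_pos (by omega)]
    rw [Finset.sum_congr rfl this, Finset.sum_sub_distrib]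
    rw [sum_inv_sub_right j (j+1) S (by omega) (by omega)]
    rw [Finset.sum_const, Nat.card_Ico]
    simp
  rw [e1, e2]
  have hSj : (S - j : ℕ) = (S - (j+1)) + 1 := by omega
  rw [hSj, Hh_succ]
  have h1 : (((S-(j+1):ℕ)):ℝ) + 1 = (((S-(j+1)) + 1 : ℕ) : ℝ) := by push_cast; ring
  have h2 : ((S-(j+1):ℕ):ℝ) * (1/(((S-(j+1)) + 1 : ℕ):ℝ)) + 1/(((S-(j+1)) + 1 : ℕ):ℝ) = 1 := by
    have : (((S-(j+1)) + 1 : ℕ) : ℝ) ≠ 0 := by positivity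
    field_simp
    exact h1
  simp only [Hh] at *
  rw [h1]
  simp only [Finset.sum_empty, Finset.range_zero] at *
  nlinarith [h2]

lemma colCm (S j : ℕ) (hj : j < S) : ∑ i ∈ Finset.Ico 0 S, CmF i j = -1 := by
  rw [← Finset.sum_Ico_consecutive _ (show (0:ℕ) ≤ j+1 by omega) (show j+1 ≤ S by omega)]
  have e2 : ∑ i ∈ Finset.Ico (j+1) S, CmF i j = 0 := by
    apply Finset.sum_eq_zero; intro i hi; simp only [Finset.mem_Ico] at hi
    simp only [CmF]; rw [if_neg (by omega), if_neg (by omega)]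
  have e1 : ∑ i ∈ Finset.Ico 0 (j+1), CmF i j
      = ((Hh j - Hh 0) - (j:ℝ) * (1/((j:ℝ)+1))) + -(Hh (j+1)) := by
    rw [Finset.sum_Ico_succ_top (by omega)]
    congr 1
    · have : ∀ i ∈ Finset.Ico 0 j, CmF i j = 1/(((j-i:ℕ)):ℝ) - 1/((j:ℝ)+1) := by
        intro i hi; simp only [Finset.mem_Ico] at hi
        simp only [CmF]; rw [if_pos (by omega)]
      rw [Finset.sum_congr rfl this, Finset.sum_sub_distrib]
      rcases Nat.eq_zero_or_pos j with h0 | h0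
      · subst h0; simp [Hh]
      · rw [sum_inv_sub_left 0 j j (by omega) (by omega)]
        rw [Finset.sum_const, Nat.card_Ico]
        simp
    · simp only [CmF]; rw [if_neg (by omega)]; simp
  rw [e1, e2, Hh_succ]
  have h2 : (j:ℝ) * (1/((j:ℝ)+1)) + 1/((j:ℝ)+1) = 1 := by
    have : (j:ℝ)+1 ≠ 0 := by positivity
    field_simp
  simp only [Hh, Finset.range_zero, Finset.sum_empty]
  nlinarith [h2]

end SZKaux

namespace SZKaux

noncomputable def Clm (S : ℕ) : Matrix (Fin S) (Fin S) ℝ := fun i j => ClF S i j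
noncomputable def Cmm (S : ℕ) : Matrix (Fin S) (Fin S) ℝ := fun i j => CmF i j
noncomputable def Blm (S : ℕ) : Matrix (Fin S) (Fin S) ℝ := fun i j => BlF S i j
noncomputable def Bmm (S : ℕ) : Matrix (Fin S) (Fin S) ℝ := fun i j => BmF i j

lemma fin_sum_ge (S : ℕ) (i : Fin S) (g : ℕ → ℝ) :
    ∑ k : Fin S, (if i ≤ k then g (k:ℕ) else 0) = ∑ k ∈ Finset.Ico (i:ℕ) S, g k := by
  have h1 : ∀ k : Fin S, (if i ≤ k then g (k:ℕ) else 0)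
      = (fun n : ℕ => if (i:ℕ) ≤ n then g n else 0) (k:ℕ) := by
    intro k
    rcases le_or_gt i k with hk | hk
    · rw [if_pos hk]; exact (if_pos (Fin.le_def.mp hk)).symm
    · rw [if_neg (not_le.mpr hk)]
      exact (if_neg (not_le.mpr (Fin.lt_def.mp hk))).symm
  rw [Finset.sum_congr rfl (fun k _ => h1 k),
    Fin.sum_univ_eq_sum_range (fun n : ℕ => if (i:ℕ) ≤ n then g n else 0)]
  rw [Finset.range_eq_Ico, ← Finset.sum_Ico_consecutive _ (Nat.zero_le (i:ℕ)) (le_of_lt i.isLt)]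
  have h2 : ∑ k ∈ Finset.Ico 0 (i:ℕ), (if (i:ℕ) ≤ k then g k else 0) = 0 := by
    apply Finset.sum_eq_zero; intro k hk; simp only [Finset.mem_Ico] at hk
    rw [if_neg (by omega)]
  rw [h2, zero_add]
  exact Finset.sum_congr rfl fun k hk => by
    simp only [Finset.mem_Ico] at hk; rw [if_pos hk.1]

lemma fin_sum_le (S : ℕ) (j : Fin S) (g : ℕ → ℝ) :
    ∑ k : Fin S, (if k ≤ j then g (k:ℕ) else 0) = ∑ k ∈ Finset.Ico 0 ((j:ℕ)+1), g k := by
  have h1 : ∀ k : Fin S, (if k ≤ j then g (k:ℕ) else 0)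
      = (fun n : ℕ => if n ≤ (j:ℕ) then g n else 0) (k:ℕ) := by
    intro k
    rcases le_or_gt k j with hk | hk
    · rw [if_pos hk]; exact (if_pos (Fin.le_def.mp hk)).symm
    · rw [if_neg (not_le.mpr hk)]
      exact (if_neg (not_le.mpr (Fin.lt_def.mp hk))).symm
  rw [Finset.sum_congr rfl (fun k _ => h1 k),
    Fin.sum_univ_eq_sum_range (fun n : ℕ => if n ≤ (j:ℕ) then g n else 0)]
  rw [Finset.range_eq_Ico, ← Finset.sum_Ico_consecutive _ (Nat.zero_le ((j:ℕ)+1))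
    (show (j:ℕ)+1 ≤ S from j.isLt)]
  have h2 : ∑ k ∈ Finset.Ico ((j:ℕ)+1) S, (if k ≤ (j:ℕ) then g k else 0) = 0 := by
    apply Finset.sum_eq_zero; intro k hk; simp only [Finset.mem_Ico] at hk
    rw [if_neg (by omega)]
  rw [h2, add_zero]
  exact Finset.sum_congr rfl fun k hk => by
    simp only [Finset.mem_Ico] at hk; rw [if_pos (by omega)]

lemma triD_mul_Bl (S : ℕ) : triD S (fun _ => 1) * Blm S = Clm S * triD S (fun _ => 1) := by
  ext i j
  rw [Matrix.mul_apply, Matrix.mul_apply]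
  have lhs : ∑ k, triD S (fun _ => 1) i k * Blm S k j
      = ∑ k : Fin S, (if i ≤ k then BlF S (k:ℕ) (j:ℕ) else 0) := by
    refine Finset.sum_congr rfl fun k _ => ?_
    simp only [triD, Blm, ite_mul, one_mul, zero_mul]
  have rhs : ∑ k, Clm S i k * triD S (fun _ => 1) k j
      = ∑ k : Fin S, (if k ≤ j then ClF S (i:ℕ) (k:ℕ) else 0) := by
    refine Finset.sum_congr rfl fun k _ => ?_
    simp only [triD, Clm, mul_ite, mul_one, mul_zero]
  rw [lhs, rhs, fin_sum_ge S i (fun n => BlF S n (j:ℕ)), fin_sum_le S j (fun n => ClF S (i:ℕ) n)]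
  exact keyBl S (i:ℕ) (j:ℕ) i.isLt j.isLt

lemma triD_mul_Bm (S : ℕ) : triD S (fun _ => 1) * Bmm S = Cmm S * triD S (fun _ => 1) := by
  ext i j
  rw [Matrix.mul_apply, Matrix.mul_apply]
  have lhs : ∑ k, triD S (fun _ => 1) i k * Bmm S k j
      = ∑ k : Fin S, (if i ≤ k then BmF (k:ℕ) (j:ℕ) else 0) := by
    refine Finset.sum_congr rfl fun k _ => ?_
    simp only [triD, Bmm, ite_mul, one_mul, zero_mul]
  have rhs : ∑ k, Cmm S i k * triD S (fun _ => 1) k j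
      = ∑ k : Fin S, (if k ≤ j then CmF (i:ℕ) (k:ℕ) else 0) := by
    refine Finset.sum_congr rfl fun k _ => ?_
    simp only [triD, Cmm, mul_ite, mul_one, mul_zero]
  rw [lhs, rhs, fin_sum_ge S i (fun n => BmF n (j:ℕ)), fin_sum_le S j (fun n => CmF (i:ℕ) n)]
  exact keyBm S (i:ℕ) (j:ℕ) i.isLt j.isLt

lemma sum_Icc_div (c : ℝ) (n : ℕ) : ∑ k ∈ Finset.Icc 1 n, c/(k:ℝ) = c * Hh n := by
  rw [Hh, Finset.mul_sum, ← Finset.Ico_add_one_right_eq_Icc, Finset.sum_Ico_eq_sum_range]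
  rw [Nat.add_sub_cancel]
  refine Finset.sum_congr rfl fun m _ => ?_
  push_cast; ring

lemma szkB_eq (S : ℕ) (lamb mub : ℝ → ℝ) (t : ℝ) :
    szkB S (fun k t => lamb t / (k : ℝ)) (fun k t => mub t / (k : ℝ)) t
      = lamb t • Blm S + mub t • Bmm S := by
  ext i j
  simp only [szkB, Blm, Bmm, BlF, BmF, Matrix.add_apply, Matrix.smul_apply, smul_eq_mul]
  rcases lt_trichotomy ((j:ℕ)) ((i:ℕ)) with h | h | h
  · simp only [if_pos h]
    push_cast
    ring
  · have hn1 : ¬ ((j:ℕ) < (i:ℕ)) := by omega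
    have hn2 : ¬ ((i:ℕ) < (j:ℕ)) := by omega
    simp only [if_neg hn1, if_neg hn2]
    rw [sum_Icc_div (mub t) ((i:ℕ)+1), sum_Icc_div (lamb t) (S - ((i:ℕ)+1))]
    push_cast
    ring
  · have hn1 : ¬ ((j:ℕ) < (i:ℕ)) := by omega
    simp only [if_neg hn1, if_pos h]
    push_cast
    ring

lemma colsum_Cl (S : ℕ) (j : Fin S) : ∑ i : Fin S, Clm S i j = -1 := by
  show ∑ i : Fin S, (fun n : ℕ => ClF S n (j:ℕ)) (i:ℕ) = -1
  rw [Fin.sum_univ_eq_sum_range (fun n : ℕ => ClF S n (j:ℕ)), Finset.range_eq_Ico]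
  exact colCl S (j:ℕ) j.isLt

lemma colsum_Cm (S : ℕ) (j : Fin S) : ∑ i : Fin S, Cmm S i j = -1 := by
  show ∑ i : Fin S, (fun n : ℕ => CmF n (j:ℕ)) (i:ℕ) = -1
  rw [Fin.sum_univ_eq_sum_range (fun n : ℕ => CmF n (j:ℕ)), Finset.range_eq_Ico]
  exact colCm S (j:ℕ) j.isLt

lemma Cl_offdiag (S : ℕ) (i j : Fin S) (h : i ≠ j) : 0 ≤ Clm S i j := by
  have hne : (i:ℕ) ≠ (j:ℕ) := fun hc => h (Fin.ext hc)
  simp only [Clm, ClF]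
  rcases lt_or_gt_of_ne hne with h1 | h1
  · rw [if_neg (by omega), if_neg (by omega)]
  · rw [if_pos (by omega)]
    have hij : (0:ℝ) < (((i:ℕ) - (j:ℕ) : ℕ) : ℝ) := by
      have : 0 < (i:ℕ) - (j:ℕ) := by omega
      exact_mod_cast this
    have hle : (((i:ℕ) - (j:ℕ) : ℕ) : ℝ) ≤ ((S - (j:ℕ) : ℕ) : ℝ) := by
      have : (i:ℕ) - (j:ℕ) ≤ S - (j:ℕ) := by have := i.isLt; omega
      exact_mod_cast this
    have := one_div_le_one_div_of_le hij hle
    linarith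

lemma Cm_offdiag (S : ℕ) (i j : Fin S) (h : i ≠ j) : 0 ≤ Cmm S i j := by
  have hne : (i:ℕ) ≠ (j:ℕ) := fun hc => h (Fin.ext hc)
  simp only [Cmm, CmF]
  rcases lt_or_gt_of_ne hne with h1 | h1
  · rw [if_pos (by omega)]
    have hij : (0:ℝ) < (((j:ℕ) - (i:ℕ) : ℕ) : ℝ) := by
      have : 0 < (j:ℕ) - (i:ℕ) := by omega
      exact_mod_cast this
    have hle : (((j:ℕ) - (i:ℕ) : ℕ) : ℝ) ≤ ((j:ℕ):ℝ) + 1 := by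
      have h2 : (((j:ℕ) - (i:ℕ) : ℕ) : ℝ) ≤ ((j:ℕ):ℝ) := by
        have : (j:ℕ) - (i:ℕ) ≤ (j:ℕ) := by omega
        exact_mod_cast this
      linarith
    have := one_div_le_one_div_of_le hij hle
    linarith
  · rw [if_neg (by omega), if_neg (by omega)]

end SZKaux

namespace SZKaux

lemma DmulB (S : ℕ) (l m : ℝ) :
    triD S (fun _ => 1) * (l • Blm S + m • Bmm S)
      = (l • Clm S + m • Cmm S) * triD S (fun _ => 1) := by
  rw [Matrix.mul_add, Matrix.add_mul, Matrix.mul_smul, Matrix.smul_mul, Matrix.mul_smul,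
    Matrix.smul_mul, triD_mul_Bl, triD_mul_Bm]

lemma tau_mul_le_abs {τ c : ℝ} (h : τ = 1 ∨ τ = -1) : τ * c ≤ |c| := by
  rcases h with h | h <;> simp [h, le_abs_self, neg_le_abs]

end SZKaux


open SZKaux
set_option maxHeartbeats 1000000

/-- Example 2 (sharp rate for batch arrivals and group services):
the SZK model with `λ_k(t) = λ(t)/k`, `μ_k(t) = μ(t)/k` and all `d_k = 1`
satisfies
`‖D(z*(t) − z**(t))‖₁ ≤ exp(−∫₀ᵗ (λ+μ)) ‖D(z*(0) − z**(0))‖₁` for any initial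
conditions, with equality whenever `D(z*(0) − z**(0)) ≥ 0` componentwise. -/
theorem szk_batch_example_sharp_rate
    (S : ℕ) (hS : 1 ≤ S)
    (lamb mub : ℝ → ℝ)
    (hlamb : ContinuousOn lamb (Ici 0) ∧ ∀ t ∈ Ici (0 : ℝ), 0 ≤ lamb t)
    (hmub : ContinuousOn mub (Ici 0) ∧ ∀ t ∈ Ici (0 : ℝ), 0 ≤ mub t)
    (f : ℝ → Fin S → ℝ)
    (hf : ∀ t, ∀ i : Fin S, f t i = lamb t / (((i : ℕ) + 1 : ℕ) : ℝ))
    (z₁ z₂ : ℝ → Fin S → ℝ)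
    (hz₁ : ∀ t ∈ Ici (0 : ℝ), ∀ i, HasDerivWithinAt (fun s => z₁ s i)
      ((szkB S (fun k t => lamb t / (k : ℝ)) (fun k t => mub t / (k : ℝ)) t).mulVec
        (z₁ t) i + f t i) (Ici 0) t)
    (hz₂ : ∀ t ∈ Ici (0 : ℝ), ∀ i, HasDerivWithinAt (fun s => z₂ s i)
      ((szkB S (fun k t => lamb t / (k : ℝ)) (fun k t => mub t / (k : ℝ)) t).mulVec
        (z₂ t) i + f t i) (Ici 0) t) :
    (∀ t ∈ Ici (0 : ℝ),
      ∑ i, |(triD S (fun _ => 1)).mulVec (z₁ t - z₂ t) i| ≤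
        Real.exp (-∫ τ in (0 : ℝ)..t, (lamb τ + mub τ)) *
          ∑ i, |(triD S (fun _ => 1)).mulVec (z₁ 0 - z₂ 0) i|) ∧
    ((∀ i, 0 ≤ (triD S (fun _ => 1)).mulVec (z₁ 0 - z₂ 0) i) →
      ∀ t ∈ Ici (0 : ℝ),
        ∑ i, |(triD S (fun _ => 1)).mulVec (z₁ t - z₂ t) i| =
          Real.exp (-∫ τ in (0 : ℝ)..t, (lamb τ + mub τ)) *
            ∑ i, |(triD S (fun _ => 1)).mulVec (z₁ 0 - z₂ 0) i|) := by
  obtain ⟨hlc, hl0⟩ := hlamb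
  obtain ⟨hmc, hm0⟩ := hmub
  set Dm : Matrix (Fin S) (Fin S) ℝ := triD S (fun _ => 1) with hDm
  set g : ℝ → ℝ := fun τ => lamb (max τ 0) + mub (max τ 0) with hg
  have hgc : Continuous g := by
    have h1 : Continuous fun τ : ℝ => max τ 0 := continuous_id.max continuous_const
    exact (hlc.comp_continuous h1 fun x => mem_Ici.mpr (le_max_right _ _)).add
      (hmc.comp_continuous h1 fun x => mem_Ici.mpr (le_max_right _ _))
  set L : ℝ → ℝ := fun t => ∫ τ in (0:ℝ)..t, g τ with hLdef
  have hL : ∀ t, HasDerivAt L (g t) t := fun t => (hgc.integral_hasStrictDerivAt 0 t).hasDerivAt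
  have hL0 : L 0 = 0 := intervalIntegral.integral_same
  have hLt : ∀ t ∈ Ici (0:ℝ), L t = ∫ τ in (0:ℝ)..t, (lamb τ + mub τ) := by
    intro t ht
    apply intervalIntegral.integral_congr
    intro τ hτ
    rw [uIcc_of_le ht] at hτ
    simp only [hg, max_eq_left hτ.1]
  have hg_eq : ∀ t ∈ Ici (0:ℝ), g t = lamb t + mub t := by
    intro t ht; simp only [hg, max_eq_left (mem_Ici.mp ht)]
  set w : ℝ → Fin S → ℝ := fun s => z₁ s - z₂ s with hwdef
  set u : ℝ → Fin S → ℝ := fun s => Dm.mulVec (w s) with hudef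
  set v : ℝ → Fin S → ℝ := fun s i => Real.exp (L s) * u s i with hvdef
  set Mt : ℝ → Matrix (Fin S) (Fin S) ℝ := fun t =>
    lamb t • Clm S + mub t • Cmm S + (lamb t + mub t) • (1 : Matrix (Fin S) (Fin S) ℝ) with hMt
  -- derivative of w
  have hw : ∀ t ∈ Ici (0:ℝ), ∀ i, HasDerivWithinAt (fun s => w s i)
      ((szkB S (fun k t => lamb t / (k : ℝ)) (fun k t => mub t / (k : ℝ)) t).mulVec
        (w t) i) (Ici 0) t := by
    intro t ht i
    have := (hz₁ t ht i).sub (hz₂ t ht i)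
    have heq : (szkB S (fun k t => lamb t / (k : ℝ)) (fun k t => mub t / (k : ℝ)) t).mulVec
        (z₁ t) i + f t i - ((szkB S (fun k t => lamb t / (k : ℝ))
          (fun k t => mub t / (k : ℝ)) t).mulVec (z₂ t) i + f t i)
        = (szkB S (fun k t => lamb t / (k : ℝ)) (fun k t => mub t / (k : ℝ)) t).mulVec
        (w t) i := by
      rw [hwdef]
      simp only [Matrix.mulVec_sub, Pi.sub_apply]
      ring
    rw [heq] at this
    exact this
  -- derivative of u
  have hu : ∀ t ∈ Ici (0:ℝ), ∀ i, HasDerivWithinAt (fun s => u s i)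
      (((lamb t • Clm S + mub t • Cmm S)).mulVec (u t) i) (Ici 0) t := by
    intro t ht i
    have h1 : ∀ s, u s i = ∑ j, Dm i j * w s j := by
      intro s; simp [hudef, Matrix.mulVec, dotProduct]
    have h2 : HasDerivWithinAt (fun s => ∑ j, Dm i j * w s j)
        (∑ j, Dm i j * ((szkB S (fun k t => lamb t / (k : ℝ))
          (fun k t => mub t / (k : ℝ)) t).mulVec (w t) j)) (Ici 0) t :=
      HasDerivWithinAt.fun_sum fun j _ => (hw t ht j).const_mul (Dm i j)
    have h3 : (∑ j, Dm i j * ((szkB S (fun k t => lamb t / (k : ℝ))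
          (fun k t => mub t / (k : ℝ)) t).mulVec (w t) j))
        = ((lamb t • Clm S + mub t • Cmm S)).mulVec (u t) i := by
      have e1 : (∑ j, Dm i j * ((szkB S (fun k t => lamb t / (k : ℝ))
          (fun k t => mub t / (k : ℝ)) t).mulVec (w t) j))
          = (Dm * (szkB S (fun k t => lamb t / (k : ℝ))
            (fun k t => mub t / (k : ℝ)) t)).mulVec (w t) i := by
        rw [← Matrix.mulVec_mulVec]
        simp [Matrix.mulVec, dotProduct]
      rw [e1, szkB_eq S lamb mub t, hDm, DmulB S (lamb t) (mub t), Matrix.mulVec_mulVec]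
    rw [← h3] at *
    exact HasDerivWithinAt.congr h2 (fun s _ => h1 s) (h1 t)
  -- derivative of v
  have hv : ∀ t ∈ Ici (0:ℝ), ∀ i, HasDerivWithinAt (fun s => v s i)
      ((Mt t).mulVec (v t) i) (Ici 0) t := by
    intro t ht i
    have hexp : HasDerivWithinAt (fun s => Real.exp (L s)) (Real.exp (L t) * g t) (Ici 0) t :=
      ((hL t).exp.hasDerivWithinAt)
    have h2 := hexp.mul (hu t ht i)
    have h3 : Real.exp (L t) * g t * u t i
        + Real.exp (L t) * ((lamb t • Clm S + mub t • Cmm S)).mulVec (u t) i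
        = (Mt t).mulVec (v t) i := by
      have hvu : v t = Real.exp (L t) • u t := by
        funext j; simp [hvdef]
      rw [hMt]
      simp only [hvu, Matrix.mulVec_smul, Matrix.add_mulVec, Matrix.smul_mulVec,
        Matrix.one_mulVec, Pi.add_apply, Pi.smul_apply, smul_eq_mul]
      rw [hg_eq t ht]
      ring
    rw [← h3]
    exact h2
  -- column sums of Mt vanish; off-diagonal entries are nonnegative
  have hcol : ∀ t ∈ Ici (0:ℝ), ∀ j, ∑ i, Mt t i j = 0 := by
    intro t ht j
    rw [hMt]
    simp only [Matrix.add_apply, Matrix.smul_apply, smul_eq_mul, Finset.sum_add_distrib,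
      ← Finset.mul_sum]
    rw [colsum_Cl S j, colsum_Cm S j]
    have h1 : ∑ i, (1 : Matrix (Fin S) (Fin S) ℝ) i j = 1 := by
      simp [Matrix.one_apply]
    rw [h1]
    ring
  have hoff : ∀ t ∈ Ici (0:ℝ), ∀ i j, i ≠ j → 0 ≤ Mt t i j := by
    intro t ht i j hij
    rw [hMt]
    simp only [Matrix.add_apply, Matrix.smul_apply, smul_eq_mul]
    rw [Matrix.one_apply_ne hij]
    have := Cl_offdiag S i j hij
    have := Cm_offdiag S i j hij
    have := hl0 t ht
    have := hm0 t ht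
    nlinarith
  -- Φ and Ψ
  set Φ : ℝ → ℝ := fun s => ∑ i, |v s i| with hΦ
  set Ψ : ℝ → ℝ := fun s => ∑ i, v s i with hΨ
  have hΦc : ContinuousOn Φ (Ici 0) := by
    apply continuousOn_finset_sum
    intro i _
    exact fun t ht => ((hv t ht i).continuousWithinAt).abs
  have hΨc : ContinuousOn Ψ (Ici 0) := by
    apply continuousOn_finset_sum
    intro i _
    exact fun t ht => (hv t ht i).continuousWithinAt
  -- key: right derivative of Φ is nonpositive
  have key : ∀ x ∈ Ici (0:ℝ), ∃ a, a ≤ 0 ∧ HasDerivWithinAt Φ a (Ici x) x := by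
    intro x hx
    set d : Fin S → ℝ := fun i => (Mt x).mulVec (v x) i with hd
    set τ : Fin S → ℝ := fun i =>
      if v x i = 0 then (if 0 ≤ d i then 1 else -1) else (if 0 ≤ v x i then 1 else -1) with hτ
    have hτpm : ∀ i, τ i = 1 ∨ τ i = -1 := by
      intro i; rw [hτ]; simp only
      split_ifs <;> simp
    have hτv : ∀ i, τ i * v x i = |v x i| := by
      intro i; rw [hτ]; simp only
      rcases eq_or_ne (v x i) 0 with h0 | h0
      · rw [if_pos h0, h0]; simp
      · rw [if_neg h0]
        rcases lt_or_gt_of_ne h0 with h1 | h1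
        · rw [if_neg (not_le.mpr h1), abs_of_neg h1]; ring
        · rw [if_pos (le_of_lt h1), abs_of_pos h1]; ring
    have hvx : ∀ i, HasDerivWithinAt (fun s => v s i) (d i) (Ici x) x := by
      intro i
      exact (hv x hx i).mono (Ici_subset_Ici.mpr hx)
    have hderiv_abs : ∀ i, HasDerivWithinAt (fun s => |v s i|) (τ i * d i) (Ici x) x := by
      intro i
      rcases eq_or_ne (v x i) 0 with h0 | h0
      · -- zero case : derivative |d i|
        have hτd : τ i * d i = |d i| := by
          rw [hτ]; simp only [if_pos h0]
          rcases le_or_gt 0 (d i) with h1 | h1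
          · rw [if_pos h1, abs_of_nonneg h1]; ring
          · rw [if_neg (not_le.mpr h1), abs_of_neg h1]; ring
        rw [hτd]
        rw [hasDerivWithinAt_iff_tendsto_slope]
        have hset : Ici x \ {x} = Ioi x := Ici_sdiff_left
        rw [hset]
        have hbase : Filter.Tendsto (slope (fun s => v s i) x) (nhdsWithin x (Ioi x))
            (nhds (d i)) := by
          have := (hasDerivWithinAt_iff_tendsto_slope.mp (hvx i))
          rwa [hset] at this
        have habs := hbase.abs
        apply habs.congr'
        filter_upwards [self_mem_nhdsWithin] with z hz
        have hzx : 0 < z - x := sub_pos.mpr hz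
        rw [slope_def_field, slope_def_field, h0, sub_zero, abs_zero, sub_zero, abs_div,
          abs_of_pos hzx]
      · -- nonzero case
        rcases lt_or_gt_of_ne h0 with h1 | h1
        · -- negative
          have hτd : τ i * d i = -(d i) := by
            rw [hτ]; simp only [if_neg h0, if_neg (not_le.mpr h1)]; ring
          rw [hτd]
          have hev : ∀ᶠ s in nhdsWithin x (Ici x), v s i ∈ Iio (0:ℝ) :=
            (hvx i).continuousWithinAt (Iio_mem_nhds h1)
          apply HasDerivWithinAt.congr_of_eventuallyEq ((hvx i).neg)
          · filter_upwards [hev] with s hs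
            exact abs_of_neg hs
          · exact abs_of_neg h1
        · -- positive
          have hτd : τ i * d i = d i := by
            rw [hτ]; simp only [if_neg h0, if_pos (le_of_lt h1)]; ring
          rw [hτd]
          have hev : ∀ᶠ s in nhdsWithin x (Ici x), v s i ∈ Ioi (0:ℝ) :=
            (hvx i).continuousWithinAt (Ioi_mem_nhds h1)
          apply HasDerivWithinAt.congr_of_eventuallyEq (hvx i)
          · filter_upwards [hev] with s hs
            exact abs_of_pos hs
          · exact abs_of_pos h1
    refine ⟨∑ i, τ i * d i, ?_, HasDerivWithinAt.fun_sum fun i _ => hderiv_abs i⟩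
    -- nonpositivity
    have hstep : ∑ i, τ i * d i ≤ ∑ j, (∑ i, Mt x i j) * |v x j| := by
      have e1 : ∑ i, τ i * d i = ∑ j, ∑ i, τ i * (Mt x i j * v x j) := by
        rw [Finset.sum_comm]
        refine Finset.sum_congr rfl fun i _ => ?_
        rw [hd]
        simp only [Matrix.mulVec, dotProduct, Finset.mul_sum]
      rw [e1]
      refine Finset.sum_le_sum fun j _ => ?_
      rw [Finset.sum_mul]
      refine Finset.sum_le_sum fun i _ => ?_
      rcases eq_or_ne i j with rfl | hij
      · refine le_of_eq ?_
        calc τ i * (Mt x i i * v x i) = Mt x i i * (τ i * v x i) := by ring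
          _ = Mt x i i * |v x i| := by rw [hτv i]
      · have h2 : τ i * v x j ≤ |v x j| := tau_mul_le_abs (hτpm i)
        have h3 : 0 ≤ Mt x i j := hoff x hx i j hij
        calc τ i * (Mt x i j * v x j) = Mt x i j * (τ i * v x j) := by ring
          _ ≤ Mt x i j * |v x j| := mul_le_mul_of_nonneg_left h2 h3
    have hzero : ∑ j, (∑ i, Mt x i j) * |v x j| = 0 := by
      refine Finset.sum_eq_zero fun j _ => ?_
      rw [hcol x hx j, zero_mul]
    linarith
  -- Φ is nonincreasing on Ici 0
  have hΦmono : ∀ t ∈ Ici (0:ℝ), Φ t ≤ Φ 0 := by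
    intro t ht
    set A : ℝ → ℝ := fun x => if hx : x ∈ Ici (0:ℝ) then (key x hx).choose else 0 with hA
    have hA0 : ∀ x ∈ Ico (0:ℝ) t, HasDerivWithinAt Φ (A x) (Ici x) x := by
      intro x hx
      rw [hA]
      simp only [dif_pos (show x ∈ Ici (0:ℝ) from hx.1)]
      exact ((key x hx.1).choose_spec).2
    have hAneg : ∀ x ∈ Ico (0:ℝ) t, A x ≤ (0:ℝ) := by
      intro x hx
      rw [hA]
      simp only [dif_pos (show x ∈ Ici (0:ℝ) from hx.1)]
      exact ((key x hx.1).choose_spec).1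
    have hBd : ∀ x ∈ Ico (0:ℝ) t, HasDerivWithinAt (fun _ : ℝ => Φ 0)
        ((fun _ : ℝ => (0:ℝ)) x) (Ici x) x := fun x _ => hasDerivWithinAt_const x _ (Φ 0)
    exact image_le_of_deriv_right_le_deriv_boundary (f := Φ) (f' := A)
      (B := fun _ => Φ 0) (B' := fun _ => 0)
      (hΦc.mono Icc_subset_Ici_self) hA0 (le_refl (Φ 0)) continuousOn_const
      hBd hAneg (right_mem_Icc.mpr ht)
  -- Ψ is constant on Ici 0
  have hΨconst : ∀ t ∈ Ici (0:ℝ), Ψ t = Ψ 0 := by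
    intro t ht
    have hder : ∀ x ∈ Ico (0:ℝ) t, HasDerivWithinAt Ψ 0 (Ici x) x := by
      intro x hx
      have h1 : HasDerivWithinAt Ψ (∑ i, (Mt x).mulVec (v x) i) (Ici x) x :=
        HasDerivWithinAt.fun_sum fun i _ => ((hv x hx.1 i).mono (Ici_subset_Ici.mpr hx.1))
      have h2 : ∑ i, (Mt x).mulVec (v x) i = 0 := by
        have e1 : ∑ i, (Mt x).mulVec (v x) i = ∑ j, (∑ i, Mt x i j) * v x j := by
          simp only [Matrix.mulVec, dotProduct]
          rw [Finset.sum_comm]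
          exact Finset.sum_congr rfl fun j _ => (Finset.sum_mul _ _ _).symm
        rw [e1]
        exact Finset.sum_eq_zero fun j _ => by rw [hcol x hx.1 j, zero_mul]
      rwa [h2] at h1
    exact constant_of_has_deriv_right_zero (hΨc.mono Icc_subset_Ici_self) hder t
      (right_mem_Icc.mpr ht)
  -- assembly
  have habs_v : ∀ s, ∀ i : Fin S, |v s i| = Real.exp (L s) * |u s i| := by
    intro s i
    rw [hvdef]
    simp only
    rw [abs_mul, abs_of_pos (Real.exp_pos _)]
  have hΦeq : ∀ s, Φ s = Real.exp (L s) * ∑ i, |u s i| := by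
    intro s
    rw [hΦ, Finset.mul_sum]
    exact Finset.sum_congr rfl fun i _ => habs_v s i
  have hΦ0 : Φ 0 = ∑ i, |u 0 i| := by
    rw [hΦeq 0, hL0]
    simp
  have halg : ∀ t, Real.exp (-(L t)) * (Real.exp (L t) * (∑ i, |u t i|)) = ∑ i, |u t i| := by
    intro t
    rw [← mul_assoc, ← Real.exp_add, neg_add_cancel, Real.exp_zero, one_mul]
  constructor
  · intro t ht
    have h1 : Φ t ≤ Φ 0 := hΦmono t ht
    rw [hΦeq t, hΦ0] at h1
    have h2 : ∑ i, |u t i| ≤ Real.exp (-(L t)) * ∑ i, |u 0 i| := by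
      have h3 := mul_le_mul_of_nonneg_left h1 (le_of_lt (Real.exp_pos (-(L t))))
      rwa [halg t] at h3
    have h4 : Real.exp (-∫ τ in (0 : ℝ)..t, (lamb τ + mub τ)) = Real.exp (-(L t)) := by
      rw [hLt t ht]
    rw [h4]
    simpa only [hudef, hwdef] using h2
  · intro hpos t ht
    have hpos' : ∀ i, 0 ≤ u 0 i := by
      intro i
      have := hpos i
      simpa only [hudef, hwdef] using this
    have h1 : Φ t ≤ Φ 0 := hΦmono t ht
    have h2 : Ψ t = Ψ 0 := hΨconst t ht
    have hv0 : ∀ i, v 0 i = u 0 i := by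
      intro i
      rw [hvdef]
      simp [hL0]
    have h3 : Ψ 0 = Φ 0 := by
      rw [hΨ, hΦ0]
      simp only
      exact Finset.sum_congr rfl fun i _ => by rw [hv0 i, abs_of_nonneg (hpos' i)]
    have h4 : |Ψ t| ≤ Φ t := Finset.abs_sum_le_sum_abs _ _
    have h5 : Φ 0 ≤ Φ t := by
      calc Φ 0 = Ψ 0 := h3.symm
        _ = Ψ t := h2.symm
        _ ≤ |Ψ t| := le_abs_self _
        _ ≤ Φ t := h4
    have h6 : Φ t = Φ 0 := le_antisymm h1 h5
    rw [hΦeq t, hΦ0] at h6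
    have h7 : ∑ i, |u t i| = Real.exp (-(L t)) * ∑ i, |u 0 i| := by
      rw [← h6, halg t]
    have h8 : Real.exp (-∫ τ in (0 : ℝ)..t, (lamb τ + mub τ)) = Real.exp (-(L t)) := by
      rw [hLt t ht]
    rw [h8]
    simpa only [hudef, hwdef] using h7
end

section
/- (Theorem 4, upper bound and weak ergodicity for a chain with absorption in zero.) In the absorbing-state setting, B(t) is essentially nonnegative for every t ≥ 0, and so is H(t) := D B(t) D⁻¹ for any diagonal D = diag(d_1,…,d_S) with positive entries. Set α_k(t) = ∑_{j=0, j≠k}^{S} q_{kj}(t) − ∑_{i=1, i≠k}^{S} (d_i/d_k) q_{ki}(t) for 1 ≤ k ≤ S (so that α_k(t) = −∑_{i=1}^S H(t)_{ik}), and β^*(t) = min_{1≤k≤S} α_k(t). Then for any two differentiable functions z*, z** : [0,∞) → ℝ^S satisfying z'(t) = B(t)z(t) for all t ≥ 0, one has ‖D(z*(t) − z**(t))‖₁ ≤ exp(−∫₀ᵗ β^*(τ) dτ) · ‖D(z*(0) − z**(0))‖₁ for all t ≥ 0; moreover, if ∫₀^∞ β^*(t) dt = +∞ then ‖z*(t)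 − z**(t)‖₁ → 0 as t → ∞. -/
open Set Filter
open Topology MeasureTheory intervalIntegral

open Topology MeasureTheory intervalIntegral in
lemma continuousOn_finset_inf'_my {ι : Type*} {s : Finset ι} (hs : s.Nonempty)
    {f : ι → ℝ → ℝ} {A : Set ℝ} (hf : ∀ i ∈ s, ContinuousOn (f i) A) :
    ContinuousOn (fun t => s.inf' hs fun i => f i t) A :=
  fun x hx => Filter.Tendsto.finset_inf'_nhds_apply hs fun i hi => hf i hi x hx


/-- The reduced matrix `B(t)` of a Markov chain on `{0,…,S}` with transition
intensities `q_{ij}(t)`: `B_{ij} = q_{ji}` for `i ≠ j` and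
`B_{ii} = −∑_{j≠i} q_{ij}` (1-based indices `1,…,S` encoded by
`i : Fin S ↦ i+1`). -/
def absB (S : ℕ) (q : ℕ → ℕ → ℝ → ℝ) (t : ℝ) : Matrix (Fin S) (Fin S) ℝ :=
  fun i j =>
    if i = j then -∑ k ∈ (Finset.range (S + 1)).erase ((i : ℕ) + 1), q ((i : ℕ) + 1) k t
    else q ((j : ℕ) + 1) ((i : ℕ) + 1) t

/-- Theorem 4 (upper bound and weak ergodicity) for a Markov chain with
absorption in zero: `B(t)` and `H(t) = D B(t) D⁻¹` are essentially nonnegative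
for any positive diagonal `D`, `α_k = ∑_{j≠k} q_{kj} − ∑_{i≠k} (dᵢ/dₖ) q_{ki}`
equals `−∑ᵢ H(t)ᵢₖ`, and with `β* = min_k α_k` the exponential upper bound and
weak ergodicity hold. -/
theorem absorbing_upper_bound_and_ergodicity
    (S : ℕ) (hS : 1 ≤ S)
    (q : ℕ → ℕ → ℝ → ℝ) (d : ℕ → ℝ)
    (hq : ∀ i j, i ≤ S → j ≤ S → i ≠ j →
      ContinuousOn (q i j) (Ici 0) ∧ ∀ t ∈ Ici (0 : ℝ), 0 ≤ q i j t)
    (habs : ∀ j, 1 ≤ j → ∀ t, q 0 j t = 0)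
    (hd : ∀ k, 1 ≤ k → k ≤ S → 0 < d k)
    (D : Matrix (Fin S) (Fin S) ℝ)
    (hD : D = Matrix.diagonal (fun i : Fin S => d ((i : ℕ) + 1)))
    (alpha : Fin S → ℝ → ℝ)
    (halpha : ∀ k t, alpha k t =
      (∑ j ∈ (Finset.range (S + 1)).erase ((k : ℕ) + 1), q ((k : ℕ) + 1) j t) -
        ∑ i ∈ (Finset.Icc 1 S).erase ((k : ℕ) + 1),
          d i / d ((k : ℕ) + 1) * q ((k : ℕ) + 1) i t)
    (bstar : ℝ → ℝ) (hbstar : ∀ t, bstar t = ⨅ k, alpha k t)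
    (z₁ z₂ : ℝ → Fin S → ℝ)
    (hz₁ : ∀ t ∈ Ici (0 : ℝ), ∀ i, HasDerivWithinAt (fun s => z₁ s i)
      ((absB S q t).mulVec (z₁ t) i) (Ici 0) t)
    (hz₂ : ∀ t ∈ Ici (0 : ℝ), ∀ i, HasDerivWithinAt (fun s => z₂ s i)
      ((absB S q t).mulVec (z₂ t) i) (Ici 0) t) :
    (∀ t ∈ Ici (0 : ℝ), ∀ i j : Fin S, i ≠ j → 0 ≤ absB S q t i j) ∧
    (∀ t ∈ Ici (0 : ℝ), ∀ i j : Fin S, i ≠ j → 0 ≤ (D * absB S q t * D⁻¹) i j) ∧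
    (∀ t ∈ Ici (0 : ℝ), ∀ k : Fin S,
      alpha k t = -∑ i, (D * absB S q t * D⁻¹) i k) ∧
    (∀ t ∈ Ici (0 : ℝ),
      ∑ i, |D.mulVec (z₁ t - z₂ t) i| ≤
        Real.exp (-∫ τ in (0 : ℝ)..t, bstar τ) * ∑ i, |D.mulVec (z₁ 0 - z₂ 0) i|) ∧
    (Tendsto (fun T => ∫ τ in (0 : ℝ)..T, bstar τ) atTop atTop →
      Tendsto (fun t => ∑ i, |z₁ t i - z₂ t i|) atTop (nhds 0)) := by
  have hS' : 0 < S := hS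
  haveI : Nonempty (Fin S) := ⟨⟨0, hS'⟩⟩
  set e : Fin S → ℝ := fun i => d ((i : ℕ) + 1) with he
  have hepos : ∀ i, 0 < e i := fun i => hd _ (Nat.le_add_left 1 _) i.isLt
  -- inverse of D
  have hDinv : D⁻¹ = Matrix.diagonal fun i => (e i)⁻¹ := by
    apply Matrix.inv_eq_right_inv
    rw [hD, Matrix.diagonal_mul_diagonal]
    have : (fun i => e i * (e i)⁻¹) = fun _ => (1:ℝ) :=
      funext fun i => mul_inv_cancel₀ (hepos i).ne'
    rw [this, Matrix.diagonal_one]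
  -- part 1
  have part1 : ∀ t ∈ Ici (0:ℝ), ∀ i j : Fin S, i ≠ j → 0 ≤ absB S q t i j := by
    intro t ht i j hij
    have hi := i.isLt; have hj := j.isLt
    have hne : ((j:ℕ)+1) ≠ ((i:ℕ)+1) := by
      intro h; exact hij (Fin.val_injective (by omega)).symm
    simp only [absB, if_neg hij]
    exact (hq _ _ (by omega) (by omega) hne).2 t ht
  -- entries of H
  have hHapply : ∀ t, ∀ i j : Fin S,
      (D * absB S q t * D⁻¹) i j = e i * absB S q t i j * (e j)⁻¹ := by
    intro t i j
    rw [hDinv, Matrix.mul_diagonal, hD, Matrix.diagonal_mul]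
  -- part 2
  have part2 : ∀ t ∈ Ici (0:ℝ), ∀ i j : Fin S, i ≠ j →
      0 ≤ (D * absB S q t * D⁻¹) i j := by
    intro t ht i j hij
    rw [hHapply]
    exact mul_nonneg (mul_nonneg (hepos i).le (part1 t ht i j hij))
      (inv_nonneg.2 (hepos j).le)
  -- part 3
  have part3 : ∀ (t : ℝ), ∀ k : Fin S,
      alpha k t = -∑ i, (D * absB S q t * D⁻¹) i k := by
    intro t k
    have hsum : ∑ i, (D * absB S q t * D⁻¹) i k
        = ∑ i ∈ Finset.univ.erase k, e i * q ((k:ℕ)+1) ((i:ℕ)+1) t * (e k)⁻¹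
          + (- ∑ j ∈ (Finset.range (S + 1)).erase ((k : ℕ) + 1), q ((k : ℕ) + 1) j t) := by
      rw [← Finset.sum_erase_add _ _ (Finset.mem_univ k)]
      congr 1
      · refine Finset.sum_congr rfl fun i hi => ?_
        rw [hHapply]
        have hik : i ≠ k := (Finset.mem_erase.1 hi).1
        simp only [absB, if_neg hik]
      · rw [hHapply]
        simp only [absB, if_pos rfl]
        rw [mul_comm (e k), mul_assoc, mul_inv_cancel₀ (hepos k).ne', mul_one, if_pos trivial]
    have hre : ∑ i ∈ (Finset.Icc 1 S).erase ((k:ℕ)+1),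
        d i / d ((k:ℕ)+1) * q ((k:ℕ)+1) i t
        = ∑ i ∈ Finset.univ.erase k, e i * q ((k:ℕ)+1) ((i:ℕ)+1) t * (e k)⁻¹ := by
      refine Finset.sum_bij (fun m hm => (⟨m - 1, ?_⟩ : Fin S)) ?_ ?_ ?_ ?_
      · have := Finset.mem_erase.1 hm
        have h2 := Finset.mem_Icc.1 this.2
        omega
      · intro m hm
        have h1 := Finset.mem_erase.1 hm
        have h2 := Finset.mem_Icc.1 h1.2
        refine Finset.mem_erase.2 ⟨?_, Finset.mem_univ _⟩
        intro h
        apply h1.1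
        have : m - 1 = (k:ℕ) := congrArg Fin.val h
        omega
      · intro m₁ hm₁ m₂ hm₂ h
        have h1 := Finset.mem_Icc.1 (Finset.mem_erase.1 hm₁).2
        have h2 := Finset.mem_Icc.1 (Finset.mem_erase.1 hm₂).2
        have : m₁ - 1 = m₂ - 1 := congrArg Fin.val h
        omega
      · intro i hi
        have hik : i ≠ k := (Finset.mem_erase.1 hi).1
        refine ⟨(i:ℕ)+1, Finset.mem_erase.2 ⟨?_, Finset.mem_Icc.2 ⟨by omega, i.isLt⟩⟩, ?_⟩
        · intro h
          exact hik (Fin.val_injective (by omega))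
        · apply Fin.val_injective; simp
      · intro m hm
        have h1 := Finset.mem_erase.1 hm
        have h2 := Finset.mem_Icc.1 h1.2
        have hm1 : m - 1 + 1 = m := by omega
        simp only [hm1, he, div_eq_mul_inv]
        ring
    rw [hsum, halpha, hre]
    ring
  -- D⁻¹ * D = 1
  have hDD : D⁻¹ * D = 1 := by
    rw [hDinv, hD, Matrix.diagonal_mul_diagonal]
    have : (fun i => (e i)⁻¹ * e i) = fun _ => (1:ℝ) :=
      funext fun i => inv_mul_cancel₀ (hepos i).ne'
    rw [this, Matrix.diagonal_one]
  -- the weighted difference w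
  set w : ℝ → Fin S → ℝ := fun t => D.mulVec (z₁ t - z₂ t) with hwdef
  have hwe : ∀ t i, w t i = e i * (z₁ t i - z₂ t i) := by
    intro t i
    rw [hwdef, hD]
    show (Matrix.diagonal e).mulVec (z₁ t - z₂ t) i = _
    rw [Matrix.mulVec_diagonal]
    rfl
  -- derivative of w
  have hw' : ∀ t ∈ Ici (0:ℝ), ∀ i, HasDerivWithinAt (fun s => w s i)
      ((D * absB S q t * D⁻¹).mulVec (w t) i) (Ici 0) t := by
    intro t ht i
    have h1 := ((hz₁ t ht i).sub (hz₂ t ht i)).const_mul (e i)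
    have hfun : (fun s => w s i) = fun s => e i * (z₁ s i - z₂ s i) :=
      funext fun s => hwe s i
    have hval : (D * absB S q t * D⁻¹).mulVec (w t) i
        = e i * ((absB S q t).mulVec (z₁ t) i - (absB S q t).mulVec (z₂ t) i) := by
      rw [hwdef]
      rw [Matrix.mulVec_mulVec, mul_assoc (D * absB S q t) D⁻¹ D, hDD, mul_one,
        ← Matrix.mulVec_mulVec]
      rw [show (absB S q t).mulVec (z₁ t - z₂ t)
            = (absB S q t).mulVec (z₁ t) - (absB S q t).mulVec (z₂ t) from
          Matrix.mulVec_sub _ _ _]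
      rw [hD, Matrix.mulVec_diagonal]
      rfl
    rw [hfun, hval]
    exact h1
  -- continuity of w and of f = ℓ¹ norm of w
  set f : ℝ → ℝ := fun t => ∑ i, |w t i| with hfdef
  have hfc : ContinuousOn f (Ici 0) := by
    apply continuousOn_finset_sum
    intro i _
    exact ContinuousOn.abs fun x hx => (hw' x hx i).continuousWithinAt
  -- continuity of alpha and bstar
  have hac : ∀ k : Fin S, ContinuousOn (alpha k) (Ici 0) := by
    intro k
    have hk := k.isLt
    have : alpha k = fun t =>
        (∑ j ∈ (Finset.range (S + 1)).erase ((k : ℕ) + 1), q ((k : ℕ) + 1) j t) -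
        ∑ i ∈ (Finset.Icc 1 S).erase ((k : ℕ) + 1),
          d i / d ((k : ℕ) + 1) * q ((k : ℕ) + 1) i t := funext (halpha k)
    rw [this]
    apply ContinuousOn.sub
    · apply continuousOn_finset_sum
      intro j hj
      have h1 := Finset.mem_erase.1 hj
      have h2 := Finset.mem_range.1 h1.2
      exact (hq _ _ (by omega) (by omega) (fun h => h1.1 h.symm)).1
    · apply continuousOn_finset_sum
      intro j hj
      have h1 := Finset.mem_erase.1 hj
      have h2 := Finset.mem_Icc.1 h1.2
      exact continuousOn_const.mul
        (hq _ _ (by omega) (by omega) (fun h => h1.1 h.symm)).1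
  have hbc : ContinuousOn bstar (Ici 0) := by
    have : bstar = fun t => Finset.univ.inf' Finset.univ_nonempty fun k : Fin S => alpha k t := by
      funext t
      rw [hbstar, Finset.inf'_univ_eq_ciInf]
    rw [this]
    exact continuousOn_finset_inf'_my _ fun k _ => hac k
  have hble : ∀ t, ∀ k : Fin S, bstar t ≤ alpha k t := by
    intro t k
    rw [hbstar]
    exact ciInf_le (Set.Finite.bddBelow (Set.finite_range _)) k
  -- primitive of bstar and exponential
  set I : ℝ → ℝ := fun u => ∫ τ in (0:ℝ)..u, bstar τ with hIdef
  set E : ℝ → ℝ := fun u => Real.exp (I u) with hEdef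
  have hEpos : ∀ u, 0 < E u := fun u => Real.exp_pos _
  have hIcont : ∀ b : ℝ, 0 ≤ b → ContinuousOn I (Icc 0 b) := by
    intro b hb
    have h1 : MeasureTheory.IntegrableOn bstar (uIcc 0 b) MeasureTheory.volume := by
      rw [uIcc_of_le hb]
      exact (hbc.mono (Icc_subset_Ici_self)).integrableOn_Icc
    have := continuousOn_primitive_interval (μ := MeasureTheory.volume) (f := bstar) (a := 0) (b := b) h1
    rw [uIcc_of_le hb] at this
    exact this
  have hI' : ∀ x : ℝ, 0 ≤ x → HasDerivWithinAt I (bstar x) (Ici x) x := by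
    intro x hx
    have hint : IntervalIntegrable bstar MeasureTheory.volume 0 x := by
      apply ContinuousOn.intervalIntegrable
      rw [uIcc_of_le hx]
      exact hbc.mono Icc_subset_Ici_self
    have hsub : Ioi x ⊆ Ici (0:ℝ) := fun y hy => le_trans hx (le_of_lt hy)
    have hmeas : StronglyMeasurableAtFilter bstar (𝓝[Ioi x] x) MeasureTheory.volume :=
      ⟨Ioi x, self_mem_nhdsWithin,
        ((hbc.mono hsub).aestronglyMeasurable measurableSet_Ioi)⟩
    have hcw : ContinuousWithinAt bstar (Ioi x) x := (hbc x hx).mono hsub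
    exact intervalIntegral.integral_hasDerivWithinAt_right hint hmeas hcw
  have hE' : ∀ x : ℝ, 0 ≤ x → HasDerivWithinAt E (E x * bstar x) (Ici x) x := by
    intro x hx
    have := (Real.hasDerivAt_exp (I x)).comp_hasDerivWithinAt x (hI' x hx)
    exact this
  -- the key column-sum estimate
  have key : ∀ x : ℝ, 0 ≤ x → ∀ h : ℝ, 0 < h →
      h * (∑ j, |(D * absB S q x * D⁻¹) j j|) ≤ 1 →
      ∑ i, |w x i + h * ((D * absB S q x * D⁻¹).mulVec (w x)) i|
        ≤ (1 - h * bstar x) * f x := by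
    intro x hx h hh hhc
    set Hx := D * absB S q x * D⁻¹ with hHx
    set c := ∑ j, |Hx j j| with hcdef
    set M : Matrix (Fin S) (Fin S) ℝ :=
      fun i j => (if i = j then 1 else 0) + h * Hx i j with hMdef
    have hMnn : ∀ i j, 0 ≤ M i j := by
      intro i j
      by_cases hij : i = j
      · subst hij
        simp only [hMdef, if_pos rfl]
        have h1 : |Hx i i| ≤ c := Finset.single_le_sum
          (f := fun j => |Hx j j|) (fun j _ => abs_nonneg _) (Finset.mem_univ i)
        have h2 : |h * Hx i i| ≤ 1 := by
          rw [abs_mul, abs_of_pos hh]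
          calc h * |Hx i i| ≤ h * c := by nlinarith
            _ ≤ 1 := hhc
        have h3 := abs_le.1 h2
        simp only [if_true]
        linarith [h3.1]
      · simp only [hMdef, if_neg hij, zero_add]
        exact mul_nonneg hh.le (part2 x hx i j hij)
    have hexp : ∀ i, w x i + h * (Hx.mulVec (w x)) i = ∑ j, M i j * w x j := by
      intro i
      have hterm : ∀ j : Fin S, M i j * w x j
          = (if i = j then w x j else 0) + h * (Hx i j * w x j) := by
        intro j
        by_cases hij : i = j <;> simp [hMdef, hij] <;> ring
      rw [Finset.sum_congr rfl fun j _ => hterm j, Finset.sum_add_distrib,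
        Finset.sum_ite_eq Finset.univ i (fun j => w x j), if_pos (Finset.mem_univ i),
        ← Finset.mul_sum]
      rfl
    have hcol : ∀ j, ∑ i, M i j = 1 - h * alpha j x := by
      intro j
      have h3 : ∑ i, Hx i j = - alpha j x := by rw [part3 x j]; ring
      simp only [hMdef]
      rw [Finset.sum_add_distrib, ← Finset.mul_sum, h3,
        Finset.sum_ite_eq' Finset.univ j (fun _ => (1:ℝ)), if_pos (Finset.mem_univ j)]
      ring
    calc ∑ i, |w x i + h * (Hx.mulVec (w x)) i|
        = ∑ i, |∑ j, M i j * w x j| := by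
          exact Finset.sum_congr rfl fun i _ => by rw [hexp]
      _ ≤ ∑ i, ∑ j, M i j * |w x j| := by
          apply Finset.sum_le_sum
          intro i _
          refine (Finset.abs_sum_le_sum_abs _ _).trans (le_of_eq ?_)
          exact Finset.sum_congr rfl fun j _ => by
            rw [abs_mul, abs_of_nonneg (hMnn i j)]
      _ = ∑ j, (∑ i, M i j) * |w x j| := by
          rw [Finset.sum_comm]
          exact Finset.sum_congr rfl fun j _ => by rw [Finset.sum_mul]
      _ ≤ ∑ j, (1 - h * bstar x) * |w x j| := by
          apply Finset.sum_le_sum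
          intro j _
          rw [hcol]
          have := hble x j
          apply mul_le_mul_of_nonneg_right _ (abs_nonneg _)
          nlinarith
      _ = (1 - h * bstar x) * f x := by rw [← Finset.mul_sum]
  -- the exponential upper bound
  have part4 : ∀ t ∈ Ici (0:ℝ), f t ≤ Real.exp (-I t) * f 0 := by
    intro t ht
    set g : ℝ → ℝ := fun u => E u * f u with hgdef
    have hgc : ContinuousOn g (Icc 0 t) :=
      (Real.continuous_exp.comp_continuousOn (hIcont t ht)).mul
        (hfc.mono Icc_subset_Ici_self)
    have bound : ∀ x ∈ Ico (0:ℝ) t, ∀ r, (0:ℝ) < r →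
        ∃ᶠ z in 𝓝[>] x, slope g x z < r := by
      intro x hx r hr
      have hx0 : (0:ℝ) ≤ x := hx.1
      set Hx := D * absB S q x * D⁻¹ with hHx
      set c := ∑ j, |Hx j j| with hcdef
      have hc0 : 0 ≤ c := Finset.sum_nonneg fun j _ => abs_nonneg _
      have hsub : Ioi x ⊆ Ici (0:ℝ) := fun y hy => le_trans hx0 (le_of_lt hy)
      have hslw : ∀ i, Tendsto (slope (fun s => w s i) x) (𝓝[>] x)
          (𝓝 ((Hx.mulVec (w x)) i)) := by
        intro i
        have h1 := (hw' x hx0 i).mono hsub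
        rw [hasDerivWithinAt_iff_tendsto_slope] at h1
        have h2 : Ioi x \ {x} = Ioi x := Set.diff_singleton_eq_self (by simp)
        rwa [h2] at h1
      set ρ : ℝ → ℝ := fun z =>
        ∑ i, |slope (fun s => w s i) x z - (Hx.mulVec (w x)) i| with hρdef
      have hρ0 : Tendsto ρ (𝓝[>] x) (𝓝 0) := by
        have h1 : Tendsto ρ (𝓝[>] x)
            (𝓝 (∑ i : Fin S, |(Hx.mulVec (w x)) i - (Hx.mulVec (w x)) i|)) :=
          tendsto_finset_sum _ fun i _ => ((hslw i).sub tendsto_const_nhds).abs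
        simpa using h1
      have hslE : Tendsto (slope E x) (𝓝[>] x) (𝓝 (E x * bstar x)) := by
        have h1 := (hE' x hx0).mono Ioi_subset_Ici_self
        rw [hasDerivWithinAt_iff_tendsto_slope] at h1
        have h2 : Ioi x \ {x} = Ioi x := Set.diff_singleton_eq_self (by simp)
        rwa [h2] at h1
      have hEt : Tendsto E (𝓝[>] x) (𝓝 (E x)) :=
        ((hE' x hx0).continuousWithinAt).mono Ioi_subset_Ici_self
      set U : ℝ → ℝ := fun z =>
        f x * slope E x z - bstar x * f x * E z + E z * ρ z with hUdef
      have hU0 : Tendsto U (𝓝[>] x) (𝓝 0) := by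
        have h1 : Tendsto U (𝓝[>] x)
            (𝓝 (f x * (E x * bstar x) - bstar x * f x * E x + E x * 0)) :=
          ((tendsto_const_nhds.mul hslE).sub (tendsto_const_nhds.mul hEt)).add
            (hEt.mul hρ0)
        have h2 : f x * (E x * bstar x) - bstar x * f x * E x + E x * 0 = 0 := by ring
        rwa [h2] at h1
      have ev1 : ∀ᶠ z in 𝓝[>] x, U z < r := hU0.eventually_lt_const hr
      have hmem : Ioo x (x + (c+1)⁻¹) ∈ 𝓝[>] x :=
        Ioo_mem_nhdsGT_of_mem ⟨le_refl x, lt_add_of_pos_right x (by positivity)⟩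
      have ev2 : ∀ᶠ z in 𝓝[>] x, slope g x z ≤ U z := by
        filter_upwards [hmem] with z hz
        obtain ⟨hz1, hz2⟩ := hz
        have hh0 : 0 < z - x := sub_pos.2 hz1
        have hne : z - x ≠ 0 := ne_of_gt hh0
        have hhc : (z - x) * c ≤ 1 := by
          have h1 : z - x < (c+1)⁻¹ := by linarith
          have hcp : (0:ℝ) < c + 1 := by linarith
          have h3 := mul_lt_mul_of_pos_right h1 hcp
          rw [inv_mul_cancel₀ hcp.ne'] at h3
          nlinarith
        have hwz : ∀ i, w z i = (w x i + (z - x) * (Hx.mulVec (w x)) i)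
            + (z - x) * (slope (fun s => w s i) x z - (Hx.mulVec (w x)) i) := by
          intro i
          rw [slope_def_field]
          field_simp
          ring
        have hfz : f z ≤ (1 - (z - x) * bstar x) * f x + (z - x) * ρ z := by
          have hstep : ∀ i : Fin S, |w z i| ≤ |w x i + (z - x) * (Hx.mulVec (w x)) i|
              + (z - x) * |slope (fun s => w s i) x z - (Hx.mulVec (w x)) i| := by
            intro i
            rw [hwz i]
            refine (abs_add_le _ _).trans (le_of_eq ?_)
            rw [abs_mul, abs_of_pos hh0]
          calc f z ≤ ∑ i, (|w x i + (z - x) * (Hx.mulVec (w x)) i|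
                + (z - x) * |slope (fun s => w s i) x z - (Hx.mulVec (w x)) i|) :=
              Finset.sum_le_sum fun i _ => hstep i
            _ = (∑ i, |w x i + (z - x) * (Hx.mulVec (w x)) i|) + (z - x) * ρ z := by
              rw [Finset.sum_add_distrib, hρdef, Finset.mul_sum]
            _ ≤ (1 - (z - x) * bstar x) * f x + (z - x) * ρ z := by
              have := key x hx0 (z - x) hh0 hhc
              linarith
        have hgz : slope g x z ≤ U z := by
          rw [slope_def_field]
          have hgzz : g z = E z * f z := rfl
          have hgxx : g x = E x * f x := rfl
          rw [hgzz, hgxx]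
          have hEz : (0:ℝ) < E z := hEpos z
          have step1 : E z * f z ≤ E z * ((1 - (z - x) * bstar x) * f x + (z - x) * ρ z) :=
            mul_le_mul_of_nonneg_left hfz hEz.le
          have step2 : (E z * f z - E x * f x) / (z - x)
              ≤ (E z * ((1 - (z - x) * bstar x) * f x + (z - x) * ρ z) - E x * f x) / (z - x) := by
            exact (div_le_div_iff_of_pos_right hh0).2 (by linarith [step1])
          have step3 : (E z * ((1 - (z - x) * bstar x) * f x + (z - x) * ρ z) - E x * f x) / (z - x)
              = U z := by
            rw [hUdef]
            simp only [slope_def_field]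
            field_simp
            ring
          linarith
        exact hgz
      have := ev1.and ev2
      refine (this.mono fun z hz => ?_).frequently
      linarith [hz.1, hz.2]
    have hmain := image_le_of_liminf_slope_right_le_deriv_boundary (f := g) (a := 0) (b := t)
      (B := fun _ => g 0) (B' := fun _ => 0) hgc le_rfl continuousOn_const
      (fun x _ => hasDerivWithinAt_const x _ _) bound ⟨ht, le_refl t⟩
    have hg0 : g 0 = f 0 := by
      have hI0 : I 0 = 0 := intervalIntegral.integral_same
      show E 0 * f 0 = f 0
      rw [hEdef]
      simp only [hI0]
      rw [Real.exp_zero, one_mul]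
    have hEft : E t * f t ≤ f 0 := by
      rw [← hg0]; exact hmain
    rw [Real.exp_neg]
    have h1 : (0:ℝ) < E t := hEpos t
    calc f t = (E t)⁻¹ * (E t * f t) := by field_simp
      _ ≤ (E t)⁻¹ * f 0 := mul_le_mul_of_nonneg_left hEft (inv_nonneg.2 h1.le)
      _ = (Real.exp (I t))⁻¹ * f 0 := rfl
  -- weak ergodicity
  have part5 : Tendsto (fun T => I T) atTop atTop →
      Tendsto (fun t => ∑ i, |z₁ t i - z₂ t i|) atTop (nhds 0) := by
    intro hdiv
    set c₂ := ∑ i : Fin S, (e i)⁻¹ with hc₂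
    have hc₂0 : 0 ≤ c₂ := Finset.sum_nonneg fun i _ => inv_nonneg.2 (hepos i).le
    have hc₂i : ∀ i : Fin S, (e i)⁻¹ ≤ c₂ := fun i =>
      Finset.single_le_sum (f := fun i : Fin S => (e i)⁻¹)
        (fun j _ => inv_nonneg.2 (hepos j).le) (Finset.mem_univ i)
    have hb1 : ∀ t : ℝ, 0 ≤ t →
        ∑ i, |z₁ t i - z₂ t i| ≤ c₂ * (Real.exp (-I t) * f 0) := by
      intro t ht
      have h1 : ∑ i, |z₁ t i - z₂ t i| ≤ c₂ * f t := by
        rw [hfdef, Finset.mul_sum]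
        apply Finset.sum_le_sum
        intro i _
        have h2 : |z₁ t i - z₂ t i| = (e i)⁻¹ * |w t i| := by
          rw [hwe t i, abs_mul, abs_of_pos (hepos i), ← mul_assoc,
            inv_mul_cancel₀ (hepos i).ne', one_mul]
        rw [h2]
        exact mul_le_mul_of_nonneg_right (hc₂i i) (abs_nonneg _)
      calc ∑ i, |z₁ t i - z₂ t i| ≤ c₂ * f t := h1
        _ ≤ c₂ * (Real.exp (-I t) * f 0) :=
          mul_le_mul_of_nonneg_left (part4 t ht) hc₂0
    have hlim : Tendsto (fun t => c₂ * (Real.exp (-I t) * f 0)) atTop (nhds 0) := by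
      have h3 : Tendsto (fun t => -I t) atTop atBot := by
        exact tendsto_neg_atBot_iff.2 hdiv
      have h4 : Tendsto (fun t => Real.exp (-I t)) atTop (nhds 0) :=
        Real.tendsto_exp_atBot.comp h3
      have h5 := (h4.mul_const (f 0)).const_mul c₂
      simpa using h5
    apply squeeze_zero' ?_ ?_ hlim
    · filter_upwards [eventually_ge_atTop (0:ℝ)] with t ht
      exact Finset.sum_nonneg fun i _ => abs_nonneg _
    · filter_upwards [eventually_ge_atTop (0:ℝ)] with t ht
      exact hb1 t ht
  exact ⟨part1, part2, fun t _ k => part3 t k, part4, part5⟩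
end
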